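/- arXiv:2006.10563 — 4 statements merged into one kernel-verified Lean document; each statement's English description precedes it below -/
import Mathlib

section
/- Let α ∈ (0,1), c₀ > 0, and let f : [c₀, ∞) → ℝ be continuously differentiable with f'(c₀) = 0, and suppose f' is absolutely continuous on a neighborhood of c₀. If lim_{b → c₀⁺} (d/db) ∫_{c₀}^{b} (b-p)^{α-1} f'(p) dp = Γ(α)·(α/(2c₀))², then lim_{x → c₀⁺} f'(x)/(x-c₀)^{1-α} = (α/(2c₀))²/Γ(2-α). -/
set_option maxHeartbeats 1000000

open Real MeasureTheory intervalIntegral Set Filter Topology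

lemma realBeta {a b : ℝ} (ha : 0 < a) (hb : 0 < b) :
    ∫ x in (0:ℝ)..1, x ^ (a - 1) * (1 - x) ^ (b - 1)
      = Real.Gamma a * Real.Gamma b / Real.Gamma (a + b) := by
  have h := Complex.Gamma_mul_Gamma_eq_betaIntegral (s := (a:ℂ)) (t := (b:ℂ))
    (by simpa using ha) (by simpa using hb)
  have h2 : Complex.betaIntegral a b
      = ((∫ x in (0:ℝ)..1, x ^ (a-1) * (1-x) ^ (b-1) : ℝ) : ℂ) := by
    rw [Complex.betaIntegral, ← intervalIntegral.integral_ofReal]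
    refine intervalIntegral.integral_congr fun x hx => ?_
    rw [uIcc_of_le zero_le_one] at hx
    push_cast
    rw [Complex.ofReal_cpow hx.1, Complex.ofReal_cpow (by linarith [hx.2] : (0:ℝ) ≤ 1 - x)]
    push_cast
    ring
  have hG : Real.Gamma (a + b) ≠ 0 := (Real.Gamma_pos_of_pos (by linarith)).ne'
  rw [h2] at h
  rw [← Complex.ofReal_add] at h
  rw [Complex.Gamma_ofReal, Complex.Gamma_ofReal, Complex.Gamma_ofReal] at h
  rw [← Complex.ofReal_mul, ← Complex.ofReal_mul] at h
  field_simp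
  rw [mul_comm]
  exact_mod_cast h.symm

lemma kernelIntegrable {p q t x : ℝ} (hp : 0 < p) (hq : 0 < q) (htx : t < x) :
    IntervalIntegrable (fun s => (x - s) ^ (p - 1) * (s - t) ^ (q - 1)) volume t x := by
  set m := (t + x) / 2 with hm
  have htm : t < m := by rw [hm]; linarith
  have hmx : m < x := by rw [hm]; linarith
  have h1 : IntervalIntegrable (fun s => (s - t) ^ (q - 1)) volume t m := by
    have h := (intervalIntegral.intervalIntegrable_rpow' (a := 0) (b := m - t)
      (by linarith : (-1:ℝ) < q - 1)).comp_sub_right t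
    simpa using h
  have hc1 : ContinuousOn (fun s => (x - s) ^ (p - 1)) (uIcc t m) := by
    apply ContinuousOn.rpow_const (by fun_prop)
    intro s hs
    rw [uIcc_of_le htm.le] at hs
    left; have h2 := hs.2; exact ne_of_gt (by linarith)
  have h2 : IntervalIntegrable (fun s => (x - s) ^ (p - 1)) volume m x := by
    have h := (intervalIntegral.intervalIntegrable_rpow' (a := x - m) (b := 0)
      (by linarith : (-1:ℝ) < p - 1)).comp_sub_left x
    simpa using h
  have hc2 : ContinuousOn (fun s => (s - t) ^ (q - 1)) (uIcc m x) := by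
    apply ContinuousOn.rpow_const (by fun_prop)
    intro s hs
    rw [uIcc_of_le hmx.le] at hs
    left; have h2 := hs.1; exact ne_of_gt (by linarith)
  exact (h1.continuousOn_mul hc1).trans (h2.mul_continuousOn hc2)

lemma betaKernel {p q t x : ℝ} (hp : 0 < p) (hq : 0 < q) (htx : t < x) :
    ∫ s in t..x, (x - s) ^ (p - 1) * (s - t) ^ (q - 1)
      = (x - t) ^ (p + q - 1) * (Real.Gamma p * Real.Gamma q / Real.Gamma (p + q)) := by
  have hxt : 0 < x - t := sub_pos.2 htx
  have hsub := intervalIntegral.integral_comp_mul_add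
      (a := 0) (b := 1) (f := fun s => (x - s) ^ (p - 1) * (s - t) ^ (q - 1)) hxt.ne' t
  simp only [mul_zero, zero_add, mul_one, sub_add_cancel] at hsub
  have key : (∫ u in (0:ℝ)..1, (x - ((x - t) * u + t)) ^ (p - 1) * ((x - t) * u + t - t) ^ (q - 1))
      = (x - t) ^ (p - 1) * (x - t) ^ (q - 1)
        * (Real.Gamma q * Real.Gamma p / Real.Gamma (q + p)) := by
    rw [← realBeta hq hp, ← intervalIntegral.integral_const_mul]
    refine intervalIntegral.integral_congr fun u hu => ?_
    rw [uIcc_of_le zero_le_one] at hu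
    have h1 : x - ((x - t) * u + t) = (x - t) * (1 - u) := by ring
    have h2 : (x - t) * u + t - t = (x - t) * u := by ring
    rw [h1, h2, Real.mul_rpow hxt.le (by linarith [hu.2]), Real.mul_rpow hxt.le hu.1]
    ring
  rw [key, smul_eq_mul, eq_comm, inv_mul_eq_iff_eq_mul₀ hxt.ne'] at hsub
  rw [hsub, show p + q - 1 = 1 + (p - 1) + (q - 1) by ring, Real.rpow_add hxt,
    Real.rpow_add hxt, Real.rpow_one, add_comm q p]
  ring


lemma fubiniTri {g : ℝ → ℝ} (hgm : Measurable g) {c₀ x p q : ℝ}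
    (hp : 0 < p) (hq : 0 < q) (hpq : 1 ≤ p + q) (hcx : c₀ < x)
    (hgi : IntegrableOn g (Set.Ioc c₀ x)) :
    IntegrableOn (fun s => (x - s) ^ (p - 1) * ∫ t in c₀..s, (s - t) ^ (q - 1) * g t)
        (Set.Ioc c₀ x) volume ∧
    (∫ s in c₀..x, (x - s) ^ (p - 1) * ∫ t in c₀..s, (s - t) ^ (q - 1) * g t)
      = (Real.Gamma p * Real.Gamma q / Real.Gamma (p + q))
        * ∫ t in c₀..x, (x - t) ^ (p + q - 1) * g t := by
  have hB : 0 ≤ Real.Gamma p * Real.Gamma q / Real.Gamma (p + q) := by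
    have h1 := Real.Gamma_pos_of_pos hp; have h2 := Real.Gamma_pos_of_pos hq
    have h3 := Real.Gamma_pos_of_pos (show (0:ℝ) < p + q by linarith)
    positivity
  set B : ℝ := Real.Gamma p * Real.Gamma q / Real.Gamma (p + q) with hBdef
  set μ : Measure ℝ := volume.restrict (Set.Ioc c₀ x) with hμ
  set H : ℝ → ℝ → ℝ := fun s t =>
    if t ∈ Set.Ioc c₀ s then (x - s) ^ (p - 1) * (s - t) ^ (q - 1) * g t else 0 with hH
  have hHm : Measurable (Function.uncurry H) := by
    have he : Function.uncurry H = fun z : ℝ × ℝ =>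
        Set.indicator {z : ℝ × ℝ | z.2 ∈ Set.Ioc c₀ z.1}
          (fun z => (x - z.1) ^ (p - 1) * (z.1 - z.2) ^ (q - 1) * g z.2) z := by
      funext z
      simp only [Function.uncurry, hH, Set.indicator_apply, Set.mem_setOf_eq]
    rw [he]
    refine Measurable.indicator (by measurability) ?_
    exact (measurableSet_lt measurable_const measurable_snd).inter
      (measurableSet_le measurable_snd measurable_fst)
  have fact1 : ∀ t, c₀ < t → (fun s => H s t)
      = (Set.Ici t).indicator (fun s => (x - s) ^ (p - 1) * (s - t) ^ (q - 1) * g t) := by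
    intro t ht; funext s
    by_cases h : t ≤ s <;>
      simp [hH, Set.indicator_apply, Set.mem_Ioc, Set.mem_Ici, h, ht]
  have hIcc : ∀ t, c₀ < t → Set.Ici t ∩ Set.Ioc c₀ x = Set.Icc t x := by
    intro t ht; ext z
    simp only [Set.mem_inter_iff, Set.mem_Ici, Set.mem_Ioc, Set.mem_Icc]
    constructor
    · rintro ⟨h1, _, h3⟩; exact ⟨h1, h3⟩
    · rintro ⟨h1, h2⟩; exact ⟨h1, lt_of_lt_of_le ht h1, h2⟩
  have miniInt : ∀ (c t : ℝ), c₀ < t → t < x →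
      (∫ s, (Set.Ici t).indicator (fun s => (x - s) ^ (p - 1) * (s - t) ^ (q - 1) * c) s ∂μ)
        = ((x - t) ^ (p + q - 1) * B) * c := by
    intro c t ht htx
    rw [hμ, MeasureTheory.integral_indicator measurableSet_Ici,
      Measure.restrict_restrict measurableSet_Ici, hIcc t ht,
      integral_Icc_eq_integral_Ioc, ← intervalIntegral.integral_of_le htx.le,
      intervalIntegral.integral_mul_const, betaKernel hp hq htx]
  have sliceInt : ∀ t, c₀ < t → t < x → Integrable (fun s => H s t) μ := by
    intro t ht htx
    rw [fact1 t ht, hμ, integrable_indicator_iff measurableSet_Ici, IntegrableOn,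
      Measure.restrict_restrict measurableSet_Ici, hIcc t ht, ← IntegrableOn,
      integrableOn_Icc_iff_integrableOn_Ioc]
    exact ((kernelIntegrable hp hq htx).mul_const (g t)).1
  have normSlice : ∀ t, c₀ < t → t < x →
      (∫ s, ‖H s t‖ ∂μ) = ((x - t) ^ (p + q - 1) * B) * |g t| := by
    intro t ht htx
    have e1 := fact1 t ht
    have e2 : ∀ s, ‖H s t‖ = Set.indicator (Set.Ici t)
        (fun s => ‖(x - s) ^ (p - 1) * (s - t) ^ (q - 1) * g t‖) s := fun s => by
      rw [show H s t = _ from congrFun e1 s, norm_indicator_eq_indicator_norm]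
    simp_rw [e2]
    rw [hμ, MeasureTheory.integral_indicator measurableSet_Ici, Measure.restrict_restrict measurableSet_Ici,
      hIcc t ht, integral_Icc_eq_integral_Ioc]
    have e3 : ∀ s ∈ Set.Ioc t x, ‖(x - s) ^ (p - 1) * (s - t) ^ (q - 1) * g t‖
        = (x - s) ^ (p - 1) * (s - t) ^ (q - 1) * |g t| := by
      intro s hs
      have h1 : (0:ℝ) ≤ x - s := by linarith [hs.2]
      have h2 : (0:ℝ) ≤ s - t := by linarith [hs.1]
      rw [Real.norm_eq_abs, abs_mul, abs_mul,
        abs_of_nonneg (Real.rpow_nonneg h1 _), abs_of_nonneg (Real.rpow_nonneg h2 _)]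
    rw [setIntegral_congr_fun measurableSet_Ioc e3, ← intervalIntegral.integral_of_le htx.le,
      intervalIntegral.integral_mul_const, betaKernel hp hq htx]
  have valSlice : ∀ t, c₀ < t → t < x →
      (∫ s, H s t ∂μ) = ((x - t) ^ (p + q - 1) * B) * g t := by
    intro t ht htx
    rw [fact1 t ht]
    exact miniInt (g t) t ht htx
  have hx0 : ∀ᵐ t ∂μ, t ∈ Set.Ioo c₀ x := by
    have h1 : ∀ᵐ t ∂μ, t ∈ Set.Ioc c₀ x := ae_restrict_mem measurableSet_Ioc
    have h2 : ∀ᵐ t ∂(volume : Measure ℝ), t ≠ x := by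
      rw [ae_iff]
      have he : {a : ℝ | ¬ a ≠ x} = {x} := by ext a; simp
      rw [he]; exact measure_singleton x
    filter_upwards [h1, ae_restrict_of_ae h2] with t ht1 ht2
    exact ⟨ht1.1, lt_of_le_of_ne ht1.2 ht2⟩
  have hInt : Integrable (Function.uncurry H) (μ.prod μ) := by
    refine (integrable_prod_iff' hHm.aestronglyMeasurable).mpr ⟨?_, ?_⟩
    · filter_upwards [hx0] with t ht
      exact sliceInt t ht.1 ht.2
    · have hm1 : AEStronglyMeasurable (fun t => ∫ s, ‖Function.uncurry H (s, t)‖ ∂μ) μ := by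
        have hm0 : Measurable (fun z : ℝ × ℝ => ‖Function.uncurry H (z.2, z.1)‖) :=
          (hHm.comp measurable_swap).norm
        exact hm0.aestronglyMeasurable.integral_prod_right'
      refine Integrable.mono' ((hgi.abs).const_mul ((x - c₀) ^ (p + q - 1) * B)) hm1 ?_
      filter_upwards [hx0] with t ht
      have hval : (∫ s, ‖Function.uncurry H (s, t)‖ ∂μ)
          = ((x - t) ^ (p + q - 1) * B) * |g t| := normSlice t ht.1 ht.2
      rw [Real.norm_eq_abs, hval]
      have h0 : (0:ℝ) ≤ x - t := by linarith [ht.2]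
      rw [abs_of_nonneg (mul_nonneg (mul_nonneg (Real.rpow_nonneg h0 _) hB) (abs_nonneg _))]
      have hle : (x - t) ^ (p + q - 1) ≤ (x - c₀) ^ (p + q - 1) :=
        Real.rpow_le_rpow h0 (by linarith [ht.1]) (by linarith)
      exact mul_le_mul_of_nonneg_right (mul_le_mul_of_nonneg_right hle hB) (abs_nonneg _)
  have inner_eq : ∀ s ∈ Set.Ioc c₀ x,
      (x - s) ^ (p - 1) * ∫ t in c₀..s, (s - t) ^ (q - 1) * g t = ∫ t, H s t ∂μ := by
    intro s hs
    have h1 : (∫ t, H s t ∂μ)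
        = ∫ t in Set.Ioc c₀ x, Set.indicator (Set.Ioc c₀ s)
            (fun t => (x - s) ^ (p - 1) * (s - t) ^ (q - 1) * g t) t := by
      rw [hμ]; congr 1; funext t; simp [hH, Set.indicator_apply]
    rw [h1, setIntegral_indicator measurableSet_Ioc,
      show Set.Ioc c₀ x ∩ Set.Ioc c₀ s = Set.Ioc c₀ s from by
        rw [Set.Ioc_inter_Ioc, max_self, min_eq_right hs.2],
      ← intervalIntegral.integral_of_le hs.1.le, ← intervalIntegral.integral_const_mul]
    congr 1; funext t; ring
  have hIout : Integrable (fun s => ∫ t, H s t ∂μ) μ := by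
    have h := hInt.integral_prod_left
    simpa [Function.uncurry] using h
  constructor
  · refine hIout.congr ?_
    rw [hμ]
    exact (ae_restrict_iff' measurableSet_Ioc).2
      (Filter.Eventually.of_forall fun s hs => (inner_eq s hs).symm)
  · have lhs_eq : (∫ s in c₀..x, (x - s) ^ (p - 1) * ∫ t in c₀..s, (s - t) ^ (q - 1) * g t)
        = ∫ s, ∫ t, H s t ∂μ ∂μ := by
      rw [intervalIntegral.integral_of_le hcx.le, ← hμ]
      exact setIntegral_congr_fun measurableSet_Ioc inner_eq
    have hswap : (∫ s, ∫ t, H s t ∂μ ∂μ) = ∫ t, ∫ s, H s t ∂μ ∂μ :=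
      integral_integral_swap hInt
    have rhs_eq : (∫ t, ∫ s, H s t ∂μ ∂μ) = B * ∫ t in c₀..x, (x - t) ^ (p + q - 1) * g t := by
      have h1 : (∫ t, ∫ s, H s t ∂μ ∂μ) = ∫ t, B * ((x - t) ^ (p + q - 1) * g t) ∂μ := by
        refine integral_congr_ae ?_
        filter_upwards [hx0] with t ht
        rw [valSlice t ht.1 ht.2]; ring
      rw [h1, MeasureTheory.integral_const_mul, intervalIntegral.integral_of_le hcx.le, ← hμ]
    rw [lhs_eq, hswap, rhs_eq]


lemma aeZeroOfIntervals {h : ℝ → ℝ} {c₀ b₁ : ℝ} (hc : c₀ < b₁)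
    (hint : Integrable h (volume : Measure ℝ))
    (hzero : ∀ y ∈ Set.Icc c₀ b₁, (∫ t in Set.Ioc c₀ y, h t) = 0) :
    ∀ᵐ t ∂(volume : Measure ℝ), t ∈ Set.Ioo c₀ b₁ → h t = 0 := by
  have hleb := IsUnifLocDoublingMeasure.ae_tendsto_average_norm_sub
    (μ := (volume : Measure ℝ)) hint.locallyIntegrable 1
  filter_upwards [hleb] with x hx hmem
  have havg : Tendsto (fun r => ⨍ y in Metric.closedBall x r, ‖h y - h x‖) (𝓝[>] (0:ℝ))
      (𝓝 0) := by
    refine hx (fun _ => x) id tendsto_id ?_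
    filter_upwards [self_mem_nhdsWithin] with r hr
    exact Metric.mem_closedBall_self (by simpa using le_of_lt (by simpa using hr))
  set m : ℝ := min (b₁ - x) (x - c₀) with hm
  have hm0 : 0 < m := by
    rw [hm]; exact lt_min (by linarith [hmem.2]) (by linarith [hmem.1])
  have hbound : ∀ r ∈ Set.Ioo (0:ℝ) m,
      |h x| ≤ 2 * ⨍ y in Metric.closedBall x r, ‖h y - h x‖ := by
    intro r hr
    have hr0 : 0 < r := hr.1
    have hxr : x + r ≤ b₁ := by
      have h2 := lt_of_lt_of_le hr.2 (min_le_left _ _); linarith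
    have hunion : Set.Ioc c₀ x ∪ Set.Ioc x (x + r) = Set.Ioc c₀ (x + r) :=
      Set.Ioc_union_Ioc_eq_Ioc (le_of_lt hmem.1) (by linarith)
    have hIx : (∫ t in Set.Ioc x (x + r), h t) = 0 := by
      have h1 := hzero x ⟨hmem.1.le, hmem.2.le⟩
      have h2 := hzero (x + r) ⟨by linarith [hmem.1], hxr⟩
      have h3 : (∫ t in Set.Ioc c₀ x ∪ Set.Ioc x (x + r), h t)
          = (∫ t in Set.Ioc c₀ x, h t) + ∫ t in Set.Ioc x (x + r), h t :=
        setIntegral_union (Set.Ioc_disjoint_Ioc_of_le le_rfl) measurableSet_Ioc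
          hint.integrableOn hint.integrableOn
      rw [hunion, h2, h1] at h3
      linarith
    have hvol : (volume (Set.Ioc x (x + r))).toReal = r := by
      rw [Real.volume_Ioc]; simp [ENNReal.toReal_ofReal hr0.le]
    have hconst : (∫ t in Set.Ioc x (x + r), h x) = r * h x := by
      rw [setIntegral_const, measureReal_def, hvol, smul_eq_mul]
    have hdiff : (∫ t in Set.Ioc x (x + r), (h x - h t)) = r * h x := by
      rw [integral_sub (integrableOn_const (by rw [Real.volume_Ioc]; simp) :
          IntegrableOn (fun _ => h x) (Set.Ioc x (x + r)) volume).integrable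
        hint.integrableOn, hIx, hconst, sub_zero]
    have hnorm : r * |h x| ≤ ∫ t in Set.Ioc x (x + r), ‖h t - h x‖ := by
      calc r * |h x| = ‖r * h x‖ := by
            rw [Real.norm_eq_abs, abs_mul, abs_of_pos hr0]
        _ = ‖∫ t in Set.Ioc x (x + r), (h x - h t)‖ := by rw [hdiff]
        _ ≤ ∫ t in Set.Ioc x (x + r), ‖h x - h t‖ := norm_integral_le_integral_norm _
        _ = ∫ t in Set.Ioc x (x + r), ‖h t - h x‖ := by
            simp_rw [norm_sub_rev]
    have hsubset : Set.Ioc x (x + r) ⊆ Metric.closedBall x r := by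
      rw [Real.closedBall_eq_Icc]
      intro z hz; exact ⟨by linarith [hz.1], hz.2⟩
    have hmono : (∫ t in Set.Ioc x (x + r), ‖h t - h x‖)
        ≤ ∫ t in Metric.closedBall x r, ‖h t - h x‖ := by
      have hio : IntegrableOn (fun t => h t - h x) (Metric.closedBall x r) volume :=
        hint.integrableOn.sub (integrableOn_const (by
          rw [Real.volume_closedBall]; exact ENNReal.ofReal_ne_top))
      exact setIntegral_mono_set hio.norm
        (Filter.Eventually.of_forall fun t => norm_nonneg _)
        (HasSubset.Subset.eventuallyLE hsubset)
    have hcb : (∫ t in Metric.closedBall x r, ‖h t - h x‖)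
        = (2 * r) * ⨍ y in Metric.closedBall x r, ‖h y - h x‖ := by
      rw [setAverage_eq, smul_eq_mul, Real.volume_real_closedBall (by linarith),
        ← mul_assoc]
      rw [mul_inv_cancel₀ (by linarith), one_mul]
    have : r * |h x| ≤ (2 * r) * ⨍ y in Metric.closedBall x r, ‖h y - h x‖ := by
      calc r * |h x| ≤ _ := hnorm
        _ ≤ _ := hmono
        _ = _ := hcb
    nlinarith [this]
  have htend : Tendsto (fun r => 2 * ⨍ y in Metric.closedBall x r, ‖h y - h x‖)
      (𝓝[>] (0:ℝ)) (𝓝 0) := by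
    have := havg.const_mul 2
    simpa using this
  have hle : |h x| ≤ 0 := by
    refine ge_of_tendsto htend ?_
    filter_upwards [Ioo_mem_nhdsGT hm0] with r hr
    exact hbound r hr
  exact abs_nonpos_iff.mp hle


/-- If `f` is `C¹` on `[c₀,∞)` with `f'(c₀) = 0`, `f'` absolutely continuous near `c₀`,
and `(d/db) ∫_{c₀}^{b} (b-p)^{α-1} f'(p) dp → Γ(α)·(α/(2c₀))²` as `b → c₀⁺`, then
`f'(x)/(x-c₀)^{1-α} → (α/(2c₀))²/Γ(2-α)` as `x → c₀⁺`. -/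
theorem stmt1 (α c₀ : ℝ) (hα0 : 0 < α) (hα1 : α < 1) (hc₀ : 0 < c₀)
    (f : ℝ → ℝ) (hf : ContDiffOn ℝ 1 f (Set.Ici c₀))
    (hf'0 : deriv f c₀ = 0)
    -- `f'` absolutely continuous on a neighborhood of `c₀`:
    (hAC : ∃ δ > 0, ∃ g : ℝ → ℝ, IntervalIntegrable g volume c₀ (c₀ + δ) ∧
      ∀ x ∈ Set.Icc c₀ (c₀ + δ), deriv f x = deriv f c₀ + ∫ t in c₀..x, g t)
    (hlim : Tendsto (deriv (fun b => ∫ p in c₀..b, (b - p) ^ (α - 1) * deriv f p))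
      (𝓝[>] c₀) (𝓝 (Real.Gamma α * (α / (2 * c₀)) ^ 2))) :
    Tendsto (fun x => deriv f x / (x - c₀) ^ (1 - α)) (𝓝[>] c₀)
      (𝓝 ((α / (2 * c₀)) ^ 2 / Real.Gamma (2 - α))) := by
  obtain ⟨δ, hδ, g0, hg0i, hg0⟩ := hAC
  have hcδ : c₀ < c₀ + δ := by linarith
  have hg0Ioc : IntegrableOn g0 (Set.Ioc c₀ (c₀ + δ)) volume := hg0i.1
  have hGsm := hg0Ioc.aestronglyMeasurable
  set G : ℝ → ℝ := AEStronglyMeasurable.mk g0 hGsm with hGdef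
  have hGm : Measurable G := hGsm.stronglyMeasurable_mk.measurable
  have hGae : g0 =ᵐ[volume.restrict (Set.Ioc c₀ (c₀ + δ))] G := hGsm.ae_eq_mk
  have hGint : IntegrableOn G (Set.Ioc c₀ (c₀ + δ)) volume := hg0Ioc.congr hGae
  have hf' : ∀ y ∈ Set.Icc c₀ (c₀ + δ), deriv f y = ∫ t in c₀..y, G t := by
    intro y hy
    rw [hg0 y hy, hf'0, zero_add, intervalIntegral.integral_of_le hy.1,
      intervalIntegral.integral_of_le hy.1]
    exact integral_congr_ae (ae_restrict_of_ae_restrict_of_subset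
      (Set.Ioc_subset_Ioc_right hy.2) hGae)
  -- kernel integrability and values
  have hkerInt : ∀ (b r : ℝ), c₀ < b → (-1:ℝ) < r →
      IntervalIntegrable (fun p => (b - p) ^ r) volume c₀ b := by
    intro b r hb hr
    have h := (intervalIntegral.intervalIntegrable_rpow' (a := b - c₀) (b := 0) hr).comp_sub_left b
    simpa using h
  have hΓα := Real.Gamma_pos_of_pos hα0
  have hker : ∀ (b r : ℝ), c₀ < b → 0 < r →
      (∫ p in c₀..b, (b - p) ^ (r - 1)) = (b - c₀) ^ r / r := by
    intro b r hb hr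
    have hΓr := Real.Gamma_pos_of_pos hr
    have e : ∀ p ∈ Set.uIcc c₀ b, (b - p) ^ (r - 1)
        = (b - p) ^ (r - 1) * (p - c₀) ^ ((1:ℝ) - 1) := by
      intro p _; rw [show (1:ℝ) - 1 = 0 by ring, Real.rpow_zero, mul_one]
    rw [intervalIntegral.integral_congr e, betaKernel hr one_pos hb, Real.Gamma_one,
      Real.Gamma_add_one hr.ne', show r + 1 - 1 = r by ring, mul_one]
    rw [mul_comm r (Real.Gamma r), div_mul_eq_div_div, div_self hΓr.ne', mul_one_div]
  -- continuity of deriv f on Icc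
  have hf'cont : ContinuousOn (deriv f) (Set.Icc c₀ (c₀ + δ)) := by
    have h1 : ContinuousOn (fun y => ∫ t in Set.Ioc c₀ y, G t) (Set.Icc c₀ (c₀ + δ)) :=
      intervalIntegral.continuousOn_primitive ((integrableOn_Icc_iff_integrableOn_Ioc).mpr hGint)
    refine ContinuousOn.congr h1 ?_
    intro y hy; rw [hf' y hy, intervalIntegral.integral_of_le hy.1]
  set M : ℝ := ∫ t in Set.Ioc c₀ (c₀ + δ), ‖G t‖ with hM
  have hf'bd : ∀ p ∈ Set.Icc c₀ (c₀ + δ), ‖deriv f p‖ ≤ M := by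
    intro p hp
    rw [hf' p hp]
    calc ‖∫ t in c₀..p, G t‖ ≤ ∫ t in c₀..p, ‖G t‖ :=
          intervalIntegral.norm_integral_le_integral_norm hp.1
      _ = ∫ t in Set.Ioc c₀ p, ‖G t‖ := by rw [intervalIntegral.integral_of_le hp.1]
      _ ≤ M := by
          rw [hM]
          exact setIntegral_mono_set hGint.norm
            (Filter.Eventually.of_forall fun t => norm_nonneg _)
            (HasSubset.Subset.eventuallyLE (Set.Ioc_subset_Ioc_right hp.2))
  set D₀ : ℝ → ℝ := fun s => ∫ t in c₀..s, (s - t) ^ (α - 1) * G t with hD₀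
  -- inversion identity
  have hPsi : ∀ x ∈ Set.Ioc c₀ (c₀ + δ),
      (∫ s in c₀..x, (x - s) ^ (-α) * D₀ s)
        = (Real.Gamma (1 - α) * Real.Gamma α) * deriv f x := by
    intro x hx
    have hfub := (fubiniTri hGm (p := 1 - α) (q := α) (by linarith) hα0 (by linarith) hx.1
      (hGint.mono_set (Set.Ioc_subset_Ioc_right hx.2))).2
    have e1 : ∀ s ∈ Set.uIcc c₀ x, (x - s) ^ (-α) * D₀ s = (x - s) ^ (1 - α - 1) * D₀ s := by
      intro s _; rw [show (1:ℝ) - α - 1 = -α by ring]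
    rw [intervalIntegral.integral_congr e1]
    simp only [hD₀]
    rw [hfub]
    have e2 : ∀ t ∈ Set.uIcc c₀ x, (x - t) ^ (1 - α + α - 1) * G t = G t := by
      intro t _; rw [show (1:ℝ) - α + α - 1 = 0 by ring, Real.rpow_zero, one_mul]
    rw [intervalIntegral.integral_congr e2, show (1:ℝ) - α + α = 1 by ring, Real.Gamma_one,
      div_one, ← hf' x ⟨hx.1.le, hx.2⟩]
  have hD₀int : ∀ b ∈ Set.Ioc c₀ (c₀ + δ), IntegrableOn D₀ (Set.Ioc c₀ b) volume := by
    intro b hb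
    have h2 := (fubiniTri hGm (p := 1) (q := α) one_pos hα0 (by linarith) hb.1
      (hGint.mono_set (Set.Ioc_subset_Ioc_right hb.2))).1
    refine h2.congr ?_
    refine (ae_restrict_iff' measurableSet_Ioc).2 (Filter.Eventually.of_forall fun s _ => ?_)
    show (b - s) ^ ((1:ℝ) - 1) * (∫ t in c₀..s, (s - t) ^ (α - 1) * G t) = D₀ s
    rw [show (1:ℝ) - 1 = 0 by ring, Real.rpow_zero, one_mul, hD₀]
  set K : ℝ := Real.Gamma α * (α / (2 * c₀)) ^ 2 with hKdef
  have hK0 : 0 < K := by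
    rw [hKdef]
    exact mul_pos hΓα (pow_pos (div_pos hα0 (by linarith)) 2)
  set F : ℝ → ℝ := fun b => ∫ p in c₀..b, (b - p) ^ (α - 1) * deriv f p with hFdef
  set D : ℝ → ℝ := deriv F with hDdef
  -- representation of F via D₀
  have hFrep : ∀ b ∈ Set.Ioc c₀ (c₀ + δ), F b = ∫ s in Set.Ioc c₀ b, D₀ s := by
    intro b hb
    have hgi' := hGint.mono_set (Set.Ioc_subset_Ioc_right hb.2)
    have h1 := (fubiniTri hGm (p := α) (q := 1) hα0 one_pos (by linarith) hb.1 hgi').2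
    have h2 := (fubiniTri hGm (p := 1) (q := α) one_pos hα0 (by linarith) hb.1 hgi').2
    have e1 : ∀ s ∈ Set.uIcc c₀ b, (b - s) ^ (α - 1) * deriv f s
        = (b - s) ^ (α - 1) * ∫ t in c₀..s, (s - t) ^ ((1:ℝ) - 1) * G t := by
      intro s hs
      rw [uIcc_of_le hb.1.le] at hs
      rw [hf' s ⟨hs.1, le_trans hs.2 hb.2⟩]
      congr 1
      exact (intervalIntegral.integral_congr fun t _ => by
        rw [show (1:ℝ) - 1 = 0 by ring, Real.rpow_zero, one_mul]).symm
    have e2 : ∀ s ∈ Set.uIcc c₀ b, D₀ s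
        = (b - s) ^ ((1:ℝ) - 1) * ∫ t in c₀..s, (s - t) ^ (α - 1) * G t := by
      intro s _
      rw [show (1:ℝ) - 1 = 0 by ring, Real.rpow_zero, one_mul, hD₀]
    have hFb : F b = (Real.Gamma α * Real.Gamma 1 / Real.Gamma (α + 1))
        * ∫ t in c₀..b, (b - t) ^ (α + 1 - 1) * G t := by
      show (∫ p in c₀..b, (b - p) ^ (α - 1) * deriv f p) = _
      rw [intervalIntegral.integral_congr e1, h1]
    have hD₀b : (∫ s in c₀..b, D₀ s) = (Real.Gamma 1 * Real.Gamma α / Real.Gamma (1 + α))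
        * ∫ t in c₀..b, (b - t) ^ (1 + α - 1) * G t := by
      rw [intervalIntegral.integral_congr e2, h2]
    rw [← intervalIntegral.integral_of_le hb.1.le, hFb, hD₀b,
      show (α:ℝ) + 1 - 1 = 1 + α - 1 by ring, show (α:ℝ) + 1 = 1 + α by ring]
    ring
  -- get b₁ where deriv F is close to K
  have hev : ∀ᶠ s in 𝓝[>] c₀, |D s - K| < K / 2 := by
    have := Metric.tendsto_nhds.mp hlim (K / 2) (half_pos hK0)
    simpa [Real.dist_eq] using this
  rw [Filter.eventually_iff] at hev
  obtain ⟨u1, hu1, hsub1⟩ := mem_nhdsGT_iff_exists_Ioc_subset.mp hev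
  set b₁ : ℝ := min u1 (c₀ + δ) with hb₁def
  have hcb₁ : c₀ < b₁ := lt_min hu1 hcδ
  have hb₁δ : b₁ ≤ c₀ + δ := min_le_right _ _
  have hDb : ∀ s ∈ Set.Ioc c₀ b₁, |D s - K| < K / 2 := fun s hs =>
    hsub1 ⟨hs.1, le_trans hs.2 (min_le_left _ _)⟩
  have hFdiff : ∀ s ∈ Set.Ioc c₀ b₁, HasDerivAt F (D s) s := by
    intro s hs
    have hne : D s ≠ 0 := by
      intro h0
      have h1 := hDb s hs
      rw [h0, zero_sub, abs_neg, abs_of_pos hK0] at h1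
      linarith
    exact hasDerivAt_deriv_iff.mpr (differentiableAt_of_deriv_ne_zero hne)
  have hDm : Measurable D := by rw [hDdef]; exact measurable_deriv F
  have hDint : IntegrableOn D (Set.Ioc c₀ b₁) volume := by
    refine Integrable.mono' (g := fun _ => 2 * K)
      (integrableOn_const (by rw [Real.volume_Ioc]; exact ENNReal.ofReal_ne_top))
      hDm.aestronglyMeasurable ?_
    refine (ae_restrict_iff' measurableSet_Ioc).2 (Filter.Eventually.of_forall fun s hs => ?_)
    have h1 := hDb s hs
    show ‖D s‖ ≤ 2 * K
    rw [Real.norm_eq_abs]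
    have h2 : |D s| - |K| ≤ |D s - K| := abs_sub_abs_le_abs_sub _ _
    rw [abs_of_pos hK0] at h2
    linarith
  have hFc₀ : F c₀ = 0 := by
    show (∫ p in c₀..c₀, (c₀ - p) ^ (α - 1) * deriv f p) = 0
    exact intervalIntegral.integral_same
  have hMα : 0 ≤ M := le_trans (norm_nonneg _) (hf'bd c₀ ⟨le_refl _, hcδ.le⟩)
  have hFbd : ∀ b ∈ Set.Icc c₀ (c₀ + δ), ‖F b‖ ≤ (M / α) * (b - c₀) ^ α := by
    intro b hb
    rcases eq_or_lt_of_le hb.1 with h | h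
    · rw [← h, hFc₀]
      simp [Real.zero_rpow hα0.ne']
    · have hbd : ∀ᵐ p ∂volume.restrict (Set.uIoc c₀ b),
          ‖(b - p) ^ (α - 1) * deriv f p‖ ≤ (b - p) ^ (α - 1) * M := by
        rw [Set.uIoc_of_le hb.1]
        refine (ae_restrict_iff' measurableSet_Ioc).2 (Filter.Eventually.of_forall fun p hp => ?_)
        rw [norm_mul, Real.norm_eq_abs ((b - p) ^ (α - 1)),
          abs_of_nonneg (Real.rpow_nonneg (by linarith [hp.2]) _)]
        exact mul_le_mul_of_nonneg_left (hf'bd p ⟨hp.1.le, le_trans hp.2 hb.2⟩)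
          (Real.rpow_nonneg (by linarith [hp.2]) _)
      calc ‖F b‖ ≤ |∫ p in c₀..b, (b - p) ^ (α - 1) * M| :=
            intervalIntegral.norm_integral_le_abs_of_norm_le hbd
              ((hkerInt b (α - 1) h (by linarith)).mul_const M)
        _ = (M / α) * (b - c₀) ^ α := by
            rw [intervalIntegral.integral_mul_const, hker b α h hα0,
              abs_of_nonneg (mul_nonneg (div_nonneg
                (Real.rpow_nonneg (by linarith) _) hα0.le) hMα)]
            ring
  have hFTC : ∀ x ∈ Set.Ioc c₀ b₁, (∫ s in Set.Ioc c₀ x, D s) = F x := by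
    intro x hx
    have hxδ : x ≤ c₀ + δ := le_trans hx.2 hb₁δ
    have hcont : ContinuousOn F (Set.Icc c₀ x) := by
      intro y hy
      rcases eq_or_lt_of_le hy.1 with h | h
      · rw [← h]
        have h0 : Tendsto (fun b : ℝ => (M / α) * (b - c₀) ^ α) (𝓝[Set.Icc c₀ x] c₀) (𝓝 0) := by
          have t0 : Tendsto (fun b : ℝ => b - c₀) (𝓝 c₀) (𝓝 0) := by
            simpa using (continuous_sub_right c₀).tendsto c₀
          have t1 : Tendsto (fun z : ℝ => z ^ α) (𝓝 0) (𝓝 0) := by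
            have h2 := (Real.continuousAt_rpow_const 0 α (Or.inr hα0.le)).tendsto
            rwa [Real.zero_rpow hα0.ne'] at h2
          have h3 := (t1.comp t0).const_mul (M / α)
          simpa [Function.comp] using h3.mono_left nhdsWithin_le_nhds
        rw [ContinuousWithinAt, hFc₀]
        refine squeeze_zero_norm' ?_ h0
        filter_upwards [eventually_mem_nhdsWithin] with b hb
        exact hFbd b ⟨hb.1, le_trans hb.2 hxδ⟩
      · exact ((hFdiff y ⟨h, le_trans hy.2 hx.2⟩).differentiableAt.continuousAt).continuousWithinAt
    have hderiv : ∀ s ∈ Set.Ioo c₀ x, HasDerivWithinAt F (D s) (Set.Ioi s) s :=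
      fun s hs => (hFdiff s ⟨hs.1, le_trans hs.2.le hx.2⟩).hasDerivWithinAt
    have hDii : IntervalIntegrable D volume c₀ x :=
      ⟨hDint.mono_set (Set.Ioc_subset_Ioc_right hx.2), by
        rw [Set.Ioc_eq_empty (not_lt.2 hx.1.le)]; exact integrableOn_empty⟩
    have h5 := intervalIntegral.integral_eq_sub_of_hasDeriv_right_of_le hx.1.le hcont hderiv hDii
    rw [hFc₀, sub_zero] at h5
    rw [← intervalIntegral.integral_of_le hx.1.le, h5]
  -- D = D₀ a.e. on Ioo c₀ b₁
  have hb₁mem : b₁ ∈ Set.Ioc c₀ (c₀ + δ) := ⟨hcb₁, hb₁δ⟩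
  have hD₀b₁ := hD₀int b₁ hb₁mem
  have hsubint : IntegrableOn (fun t => D t - D₀ t) (Set.Ioc c₀ b₁) volume := hDint.sub hD₀b₁
  have hint1 : Integrable ((Set.Ioc c₀ b₁).indicator (fun t => D t - D₀ t)) volume :=
    hsubint.integrable_indicator measurableSet_Ioc
  have hzero1 : ∀ y ∈ Set.Icc c₀ b₁,
      (∫ t in Set.Ioc c₀ y, (Set.Ioc c₀ b₁).indicator (fun t => D t - D₀ t) t) = 0 := by
    intro y hy
    rw [setIntegral_indicator measurableSet_Ioc,
      show Set.Ioc c₀ y ∩ Set.Ioc c₀ b₁ = Set.Ioc c₀ y from by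
        rw [Set.Ioc_inter_Ioc, max_self, min_eq_left hy.2]]
    rcases eq_or_lt_of_le hy.1 with h | h
    · rw [← h]; simp
    · have hy' : y ∈ Set.Ioc c₀ b₁ := ⟨h, hy.2⟩
      rw [integral_sub (hDint.mono_set (Set.Ioc_subset_Ioc_right hy.2))
        (hD₀b₁.mono_set (Set.Ioc_subset_Ioc_right hy.2)),
        hFTC y hy', ← hFrep y ⟨h, le_trans hy.2 hb₁δ⟩, sub_self]
  have haeDD₀ := aeZeroOfIntervals hcb₁ hint1 hzero1
  -- final ε-argument
  have hΓ1α : 0 < Real.Gamma (1 - α) := Real.Gamma_pos_of_pos (by linarith)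
  have hT : 0 < Real.Gamma (1 - α) * Real.Gamma α := mul_pos hΓ1α hΓα
  have hΓ2 : Real.Gamma (2 - α) = (1 - α) * Real.Gamma (1 - α) := by
    rw [show (2:ℝ) - α = (1 - α) + 1 by ring,
      Real.Gamma_add_one (show (1:ℝ) - α ≠ 0 by linarith)]
  have hKval : (α / (2 * c₀)) ^ 2 / Real.Gamma (2 - α)
      = K / ((1 - α) * (Real.Gamma (1 - α) * Real.Gamma α)) := by
    have h1α : (0:ℝ) < 1 - α := by linarith
    rw [hKdef, hΓ2]
    rw [div_eq_div_iff (by positivity) (by positivity)]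
    ring
  rw [Metric.tendsto_nhds]
  intro ε hε
  set ε' : ℝ := ε * ((1 - α) * (Real.Gamma (1 - α) * Real.Gamma α)) / 2 with hε'def
  have hε'0 : 0 < ε' := by
    rw [hε'def]
    have h1α : (0:ℝ) < 1 - α := by linarith
    positivity
  have hev2 : {s | |D s - K| < ε'} ∈ 𝓝[>] c₀ := by
    have h6 := Metric.tendsto_nhds.mp hlim ε' hε'0
    rw [Filter.eventually_iff] at h6
    simpa [Real.dist_eq] using h6
  obtain ⟨u2, hu2, hsub2⟩ := mem_nhdsGT_iff_exists_Ioc_subset.mp hev2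
  have hcb₂ : c₀ < min u2 b₁ := lt_min hu2 hcb₁
  filter_upwards [Ioc_mem_nhdsGT hcb₂] with x hx
  have hxb₁ : x ∈ Set.Ioc c₀ b₁ := ⟨hx.1, le_trans hx.2 (min_le_right _ _)⟩
  have hxu2 : x ≤ u2 := le_trans hx.2 (min_le_left _ _)
  have hxδ : x ∈ Set.Ioc c₀ (c₀ + δ) := ⟨hx.1, le_trans hxb₁.2 hb₁δ⟩
  have hxc : 0 < x - c₀ := by linarith [hx.1]
  have hP : 0 < (x - c₀) ^ (1 - α) := Real.rpow_pos_of_pos hxc _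
  have hkerx : (∫ p in c₀..x, (x - p) ^ (-α)) = (x - c₀) ^ (1 - α) / (1 - α) := by
    have h7 := hker x (1 - α) hx.1 (by linarith)
    rw [show (1:ℝ) - α - 1 = -α from by ring] at h7
    exact h7
  have hAint : IntegrableOn (fun s => (x - s) ^ (-α) * D₀ s) (Set.Ioc c₀ x) volume := by
    have h8 := (fubiniTri hGm (p := 1 - α) (q := α) (by linarith) hα0 (by linarith) hx.1
      (hGint.mono_set (Set.Ioc_subset_Ioc_right hxδ.2))).1
    refine h8.congr ?_
    refine (ae_restrict_iff' measurableSet_Ioc).2 (Filter.Eventually.of_forall fun s _ => ?_)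
    show (x - s) ^ ((1:ℝ) - α - 1) * (∫ t in c₀..s, (s - t) ^ (α - 1) * G t)
      = (x - s) ^ (-α) * D₀ s
    rw [show (1:ℝ) - α - 1 = -α from by ring, hD₀]
  have hKii : IntervalIntegrable (fun s => (x - s) ^ (-α) * K) volume c₀ x :=
    (hkerInt x (-α) hx.1 (by linarith)).mul_const K
  have hAii : IntervalIntegrable (fun s => (x - s) ^ (-α) * D₀ s) volume c₀ x :=
    ⟨hAint, by rw [Set.Ioc_eq_empty (not_lt.2 hx.1.le)]; exact integrableOn_empty⟩
  have hsplit : (Real.Gamma (1 - α) * Real.Gamma α) * deriv f x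
        - K * ((x - c₀) ^ (1 - α) / (1 - α))
      = ∫ s in c₀..x, ((x - s) ^ (-α) * D₀ s - (x - s) ^ (-α) * K) := by
    rw [intervalIntegral.integral_sub hAii hKii, hPsi x hxδ,
      intervalIntegral.integral_mul_const, hkerx]
    ring
  have hane : ∀ᵐ s ∂(volume : Measure ℝ), s ≠ x := by
    rw [ae_iff]
    have he : {a : ℝ | ¬ a ≠ x} = {x} := by ext a; simp
    rw [he]; exact measure_singleton x
  have hDiff : |(Real.Gamma (1 - α) * Real.Gamma α) * deriv f x
        - K * ((x - c₀) ^ (1 - α) / (1 - α))|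
      ≤ ε' * ((x - c₀) ^ (1 - α) / (1 - α)) := by
    rw [hsplit, ← Real.norm_eq_abs]
    calc ‖∫ s in c₀..x, ((x - s) ^ (-α) * D₀ s - (x - s) ^ (-α) * K)‖
        ≤ |∫ s in c₀..x, (x - s) ^ (-α) * ε'| := by
          refine intervalIntegral.norm_integral_le_abs_of_norm_le ?_
            ((hkerInt x (-α) hx.1 (by linarith)).mul_const ε')
          rw [Set.uIoc_of_le hx.1.le]
          filter_upwards [ae_restrict_of_ae haeDD₀, ae_restrict_of_ae hane,
            ae_restrict_mem measurableSet_Ioc] with s hs1 hs2 hs3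
          have hsx : s < x := lt_of_le_of_ne hs3.2 hs2
          have hsIoo : s ∈ Set.Ioo c₀ b₁ := ⟨hs3.1, lt_of_lt_of_le hsx hxb₁.2⟩
          have hDeq : D₀ s = D s := by
            have h9 := hs1 hsIoo
            rw [Set.indicator_of_mem (Set.mem_Ioc.2 ⟨hsIoo.1, hsIoo.2.le⟩)] at h9
            linarith
          have hsK : |D s - K| < ε' :=
            hsub2 ⟨hs3.1, le_trans hs3.2 hxu2⟩
          rw [← mul_sub, norm_mul, Real.norm_eq_abs ((x - s) ^ (-α)),
            abs_of_nonneg (Real.rpow_nonneg (by linarith) _), hDeq]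
          exact mul_le_mul_of_nonneg_left (le_of_lt hsK)
            (Real.rpow_nonneg (by linarith) _)
      _ = ε' * ((x - c₀) ^ (1 - α) / (1 - α)) := by
          rw [intervalIntegral.integral_mul_const, hkerx,
            abs_of_nonneg (mul_nonneg (div_nonneg hP.le (by linarith)) hε'0.le)]
          ring
  have heq : deriv f x / (x - c₀) ^ (1 - α) - (α / (2 * c₀)) ^ 2 / Real.Gamma (2 - α)
      = ((Real.Gamma (1 - α) * Real.Gamma α) * deriv f x
          - K * ((x - c₀) ^ (1 - α) / (1 - α)))
        / ((Real.Gamma (1 - α) * Real.Gamma α) * (x - c₀) ^ (1 - α)) := by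
    rw [hKval]
    have h1α : (0:ℝ) < 1 - α := by linarith
    field_simp
  rw [Real.dist_eq, heq, abs_div,
    abs_of_pos (mul_pos hT hP)]
  have hfin := (div_le_div_iff_of_pos_right (mul_pos hT hP)).mpr hDiff
  refine lt_of_le_of_lt hfin ?_
  have hend : ε' * ((x - c₀) ^ (1 - α) / (1 - α))
      / ((Real.Gamma (1 - α) * Real.Gamma α) * (x - c₀) ^ (1 - α)) = ε / 2 := by
    rw [hε'def]
    have h1α : (0:ℝ) < 1 - α := by linarith
    field_simp
  rw [hend]
  linarith
end

section
/- Let α ∈ (0,1), c₁ > 0. Define M₁(p,y) = (1/Γ(1-α)) ∫_y^p (1 - p^{-2/α} μ^{2/α})^{-α} dμ for 0 ≤ y ≤ p, and recursively Mₙ(p,y) = ∫_y^p M₁(a,y) M_{n-1}(p,a) da for n ≥ 2. Then for every n ≥ 2 and 0 ≤ y ≤ p, 0 ≤ Mₙ(p,y) ≤ [ (Γ(1+α/2)/Γ(1-α/2)) p ]ⁿ · p^{n-1}/(n-1)!. -/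
open Real MeasureTheory intervalIntegral Set Filter Topology

/-- Real Beta integral. -/
lemma betaReal {a b : ℝ} (ha : 0 < a) (hb : 0 < b) :
    ∫ t in (0:ℝ)..1, t ^ (a - 1) * (1 - t) ^ (b - 1) =
      Real.Gamma a * Real.Gamma b / Real.Gamma (a + b) := by
  have h := Complex.Gamma_mul_Gamma_eq_betaIntegral (s := a) (t := b)
    (by simpa using ha) (by simpa using hb)
  have hint : (Complex.betaIntegral a b) =
      ((∫ t in (0:ℝ)..1, t ^ (a - 1) * (1 - t) ^ (b - 1) : ℝ) : ℂ) := by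
    rw [Complex.betaIntegral, ← intervalIntegral.integral_ofReal]
    apply intervalIntegral.integral_congr
    intro x hx
    rw [Set.uIcc_of_le (by norm_num : (0:ℝ) ≤ 1)] at hx
    show (x:ℂ) ^ ((a:ℂ) - 1) * (1 - (x:ℂ)) ^ ((b:ℂ) - 1) = ((x ^ (a - 1) * (1 - x) ^ (b - 1) : ℝ) : ℂ)
    rw [show ((a:ℂ) - 1) = ((a - 1 : ℝ) : ℂ) by push_cast; ring,
      show ((b:ℂ) - 1) = ((b - 1 : ℝ) : ℂ) by push_cast; ring,
      show (1 - (x:ℂ)) = ((1 - x : ℝ) : ℂ) by push_cast; ring,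
      ← Complex.ofReal_cpow hx.1, ← Complex.ofReal_cpow (by linarith [hx.2])]
    push_cast
    ring
  rw [hint, show ((a:ℂ) + b) = ((a + b : ℝ) : ℂ) by push_cast; ring,
    Complex.Gamma_ofReal, Complex.Gamma_ofReal, Complex.Gamma_ofReal] at h
  have h' : Real.Gamma a * Real.Gamma b =
      Real.Gamma (a + b) * ∫ t in (0:ℝ)..1, t ^ (a - 1) * (1 - t) ^ (b - 1) := by
    exact_mod_cast h
  have hne : Real.Gamma (a + b) ≠ 0 := (Real.Gamma_pos_of_pos (by linarith)).ne'
  field_simp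
  linarith [h']

/-- Real Beta integrand is interval integrable on `[0,1]`. -/
lemma betaIntegrableReal {a b : ℝ} (ha : 0 < a) (hb : 0 < b) :
    IntervalIntegrable (fun t : ℝ => t ^ (a - 1) * (1 - t) ^ (b - 1)) volume 0 1 := by
  have h := Complex.betaIntegral_convergent (u := a) (v := b) (by simpa using ha)
    (by simpa using hb)
  refine h.mono_fun ?_ ?_
  · exact (by fun_prop :
      Measurable (fun t : ℝ => t ^ (a - 1) * (1 - t) ^ (b - 1))).aestronglyMeasurable
  · refine (ae_restrict_iff' measurableSet_uIoc).2 (Eventually.of_forall fun t ht => ?_)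
    rw [Set.uIoc_of_le (by norm_num : (0:ℝ) ≤ 1)] at ht
    have ht0 : 0 < t := ht.1
    have ht1 : t ≤ 1 := ht.2
    rcases eq_or_lt_of_le ht1 with rfl | ht1'
    · by_cases hb1 : b = 1
      · simp [hb1]
      · have hbc : ((b:ℂ) - 1) ≠ 0 := by
          simp only [ne_eq, sub_eq_zero]
          exact_mod_cast hb1
        have hbr : b - 1 ≠ 0 := sub_ne_zero.2 hb1
        simp [Complex.zero_cpow hbc, Real.zero_rpow hbr]
    · have h1t : 0 < 1 - t := by linarith
      simp only [norm_mul, Real.norm_eq_abs]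
      rw [abs_of_nonneg (Real.rpow_nonneg ht0.le _), abs_of_nonneg (Real.rpow_nonneg h1t.le _)]
      rw [show (1 - (t:ℂ)) = ((1 - t : ℝ) : ℂ) by push_cast; ring]
      rw [Complex.norm_cpow_eq_rpow_re_of_pos ht0, Complex.norm_cpow_eq_rpow_re_of_pos h1t]
      simp

/-- `M₁(p,y) = (1/Γ(1-α)) ∫_y^p (1 - p^{-2/α} μ^{2/α})^{-α} dμ`. -/
noncomputable def Mone (α p y : ℝ) : ℝ :=
  (1 / Real.Gamma (1 - α)) * ∫ μ in y..p, (1 - p ^ (-(2/α)) * μ ^ (2/α)) ^ (-α)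

/-- The kernels `Mₙ`, defined recursively by
`Mₙ(p,y) = ∫_y^p M₁(a,y) M_{n-1}(p,a) da` for `n ≥ 2` (with `M 0 := 0`, unused). -/
noncomputable def Mker (α : ℝ) : ℕ → ℝ → ℝ → ℝ
  | 0 => fun _ _ => 0
  | 1 => fun p y => Mone α p y
  | (n+2) => fun p y => ∫ a in y..p, Mone α a y * Mker α (n+1) p a

section aux
variable {α : ℝ} (hα0 : 0 < α) (hα1 : α < 1)

include hα0 hα1 in
lemma base_nonneg {p μ : ℝ} (hμ0 : 0 ≤ μ) (hμp : μ ≤ p) :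
    0 ≤ 1 - p ^ (-(2/α)) * μ ^ (2/α) := by
  have hq : (0:ℝ) ≤ 2/α := by positivity
  have h1 : μ ^ (2/α) ≤ p ^ (2/α) := Real.rpow_le_rpow hμ0 hμp hq
  have h2 : p ^ (-(2/α)) * μ ^ (2/α) ≤ p ^ (-(2/α)) * p ^ (2/α) :=
    mul_le_mul_of_nonneg_left h1 (Real.rpow_nonneg (hμ0.trans hμp) _)
  rcases eq_or_lt_of_le (hμ0.trans hμp) with rfl | hp
  · rw [Real.zero_rpow (neg_ne_zero.2 (div_pos two_pos hα0).ne')] at h2 ⊢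
    simpa using h2
  · rw [← Real.rpow_add hp, neg_add_cancel, Real.rpow_zero] at h2
    linarith

include hα0 hα1 in
/-- Pointwise bound of the `Mone` integrand by `(1 - μ/p) ^ (-α)`. -/
lemma integrand_le {p μ : ℝ} (hp : 0 < p) (hμ0 : 0 ≤ μ) (hμp : μ ≤ p) :
    (1 - p ^ (-(2/α)) * μ ^ (2/α)) ^ (-α) ≤ (1 - μ/p) ^ (-α) := by
  rcases eq_or_lt_of_le hμp with rfl | hμp'
  · rw [← Real.rpow_add hp, neg_add_cancel, Real.rpow_zero, sub_self, div_self hp.ne',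
      sub_self, Real.zero_rpow (neg_ne_zero.2 hα0.ne')]
  have hB : 0 < 1 - μ/p := by
    rw [sub_pos]
    exact (div_lt_one hp).2 hμp'
  have hkey : p ^ (-(2/α)) * μ ^ (2/α) ≤ μ / p := by
    have hrw : p ^ (-(2/α)) * μ ^ (2/α) = (μ/p) ^ (2/α) := by
      rw [Real.div_rpow hμ0 hp.le, Real.rpow_neg hp.le, div_eq_mul_inv, mul_comm]
      exact (div_eq_mul_inv _ _).symm
    rw [hrw]
    rcases eq_or_lt_of_le hμ0 with rfl | hμ0'
    · rw [zero_div, Real.zero_rpow (div_pos two_pos hα0).ne']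
    · have hx1 : μ / p ≤ 1 := by
        rw [div_le_one hp]; exact hμp
      have := Real.rpow_le_rpow_of_exponent_ge (div_pos hμ0' hp) hx1
        (show (1:ℝ) ≤ 2/α by rw [le_div_iff₀ hα0]; linarith)
      simpa [Real.rpow_one] using this
  exact Real.rpow_le_rpow_of_nonpos hB (by linarith) (by linarith)

include hα0 hα1 in
/-- Integrability of the `Mone` integrand on `[0, p]`. -/
lemma integrandIntegrable {p : ℝ} (hp : 0 < p) :
    IntervalIntegrable (fun μ : ℝ => (1 - p ^ (-(2/α)) * μ ^ (2/α)) ^ (-α)) volume 0 p := by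
  have h0 : IntervalIntegrable (fun x : ℝ => x ^ (-α)) volume 1 0 :=
    intervalIntegral.intervalIntegrable_rpow' (by linarith)
  have h1 : IntervalIntegrable (fun x : ℝ => (1 - x) ^ (-α)) volume 0 1 := by
    simpa using (h0.comp_sub_left 1)
  have h2 : IntervalIntegrable (fun μ : ℝ => (1 - p⁻¹ * μ) ^ (-α)) volume 0 p := by
    have := h1.comp_mul_left (c := p⁻¹)
    simpa [hp.ne'] using this
  refine h2.mono_fun ?_ ?_
  · exact (by fun_prop :
      Measurable (fun μ : ℝ => (1 - p ^ (-(2/α)) * μ ^ (2/α)) ^ (-α))).aestronglyMeasurable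
  · refine (ae_restrict_iff' measurableSet_uIoc).2 (Eventually.of_forall fun μ hμ => ?_)
    rw [Set.uIoc_of_le hp.le] at hμ
    dsimp only
    have hb := base_nonneg hα0 hα1 hμ.1.le hμ.2
    rw [Real.norm_eq_abs, Real.norm_eq_abs, abs_of_nonneg (Real.rpow_nonneg hb _),
      abs_of_nonneg (Real.rpow_nonneg (by
        rw [sub_nonneg, mul_comm, ← div_eq_mul_inv]
        exact (div_le_one hp).2 hμ.2 ) _)]
    rw [show p⁻¹ * μ = μ / p by rw [mul_comm, ← div_eq_mul_inv]]
    exact integrand_le hα0 hα1 hp hμ.1.le hμ.2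
end aux

section aux2
variable {α : ℝ} (hα0 : 0 < α) (hα1 : α < 1)

include hα0 hα1 in
lemma Ibeta : ∫ u in (0:ℝ)..1, (1 - u ^ (2/α)) ^ (-α) =
    Real.Gamma (1 + α/2) * Real.Gamma (1 - α) / Real.Gamma (1 - α/2) := by
  set G : ℝ → ℝ := fun u => (1 - u ^ (2/α)) ^ (-α) with hG
  have hGint : IntervalIntegrable G volume 0 1 := by
    have := integrandIntegrable hα0 hα1 (p := 1) one_pos
    simpa [hG, Real.one_rpow] using this
  have ha2 : (0:ℝ) < α/2 := by positivity
  have hb2 : (0:ℝ) < 1 - α := by linarith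
  have hEq : Set.EqOn (fun x : ℝ => α/2 * (x ^ (α/2 - 1) * (1 - x) ^ (-α)))
      (fun x : ℝ => (α/2 * x ^ (α/2 - 1)) • (G ∘ fun x : ℝ => x ^ (α/2)) x) (Set.uIcc 0 1) := by
    intro x hx
    rw [Set.uIcc_of_le (by norm_num : (0:ℝ) ≤ 1)] at hx
    have hxx : ((x ^ (α/2) : ℝ)) ^ (2/α) = x := by
      rw [← Real.rpow_mul hx.1, show α/2 * (2/α) = 1 by field_simp, Real.rpow_one]
    simp only [Function.comp, hG, smul_eq_mul, hxx]
    ring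
  have hbeta : IntervalIntegrable (fun t : ℝ => t ^ (α/2 - 1) * (1 - t) ^ (-α)) volume 0 1 := by
    have := betaIntegrableReal ha2 hb2
    rw [show (1:ℝ) - α - 1 = -α by ring] at this
    exact this
  have hsub := intervalIntegral.integral_comp_smul_deriv''' (a := (0:ℝ)) (b := 1)
    (f := fun x => x ^ (α/2)) (f' := fun x => α/2 * x ^ (α/2 - 1)) (g := G)
    (fun x _ => (Real.continuousAt_rpow_const x (α/2) (Or.inr (by positivity))).continuousWithinAt)
    (by
      intro x hx
      rw [show min (0:ℝ) 1 = 0 by norm_num, show max (0:ℝ) 1 = 1 by norm_num] at hx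
      exact (Real.hasDerivAt_rpow_const (Or.inl hx.1.ne')).hasDerivWithinAt)
    (by
      refine ContinuousOn.mono (s := Set.Ioo (0:ℝ) 1) ?_ ?_
      · intro u hu
        have hin : ContinuousAt (fun u : ℝ => 1 - u ^ (2/α)) u :=
          continuousAt_const.sub (Real.continuousAt_rpow_const u _ (Or.inl hu.1.ne'))
        have hpos : 0 < 1 - u ^ (2/α) := by
          have := Real.rpow_lt_one (z := 2/α) hu.1.le hu.2 (by positivity)
          linarith
        exact (ContinuousAt.comp (g := fun t : ℝ => t ^ (-α))
          (f := fun u : ℝ => 1 - u ^ (2/α)) (x := u)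
          (Real.continuousAt_rpow_const _ (-α) (Or.inl hpos.ne')) hin).continuousWithinAt
      · rintro _ ⟨x, hx, rfl⟩
        rw [show min (0:ℝ) 1 = 0 by norm_num, show max (0:ℝ) 1 = 1 by norm_num] at hx
        exact ⟨Real.rpow_pos_of_pos hx.1 _, Real.rpow_lt_one hx.1.le hx.2 (by positivity)⟩)
    (by
      refine ((intervalIntegrable_iff' (μ := volume)).1 hGint).mono_set ?_
      rintro _ ⟨x, hx, rfl⟩
      rw [Set.uIcc_of_le (by norm_num : (0:ℝ) ≤ 1)] at hx ⊢
      exact ⟨Real.rpow_nonneg hx.1 _, Real.rpow_le_one hx.1 hx.2 (by positivity)⟩)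
    (by
      refine ((intervalIntegrable_iff' (μ := volume)).1 (hbeta.const_mul (α/2))).congr_fun hEq measurableSet_uIcc)
  rw [Real.zero_rpow ha2.ne', Real.one_rpow] at hsub
  rw [← hsub, ← intervalIntegral.integral_congr hEq, intervalIntegral.integral_const_mul]
  have hBval := betaReal ha2 hb2
  rw [show (1:ℝ) - α - 1 = -α by ring, show α/2 + (1 - α) = 1 - α/2 by ring] at hBval
  rw [hBval, show (1:ℝ) + α/2 = α/2 + 1 by ring, Real.Gamma_add_one ha2.ne']
  ring

include hα0 hα1 in
lemma Mone_zero {p : ℝ} (hp : 0 < p) :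
    Mone α p 0 = Real.Gamma (1 + α/2) / Real.Gamma (1 - α/2) * p := by
  have h1 : (∫ μ in (0:ℝ)..p, (1 - p ^ (-(2/α)) * μ ^ (2/α)) ^ (-α)) =
      p * ∫ u in (0:ℝ)..1, (1 - u ^ (2/α)) ^ (-α) := by
    have h2 := intervalIntegral.smul_integral_comp_mul_left
      (f := fun μ : ℝ => (1 - p ^ (-(2/α)) * μ ^ (2/α)) ^ (-α)) (a := (0:ℝ)) (b := 1) p
    rw [mul_zero, mul_one] at h2
    rw [← h2, smul_eq_mul]
    congr 1
    apply intervalIntegral.integral_congr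
    intro x hx
    rw [Set.uIcc_of_le (by norm_num : (0:ℝ) ≤ 1)] at hx
    dsimp only
    rw [Real.mul_rpow hp.le hx.1, ← mul_assoc, Real.rpow_neg hp.le,
      inv_mul_cancel₀ (Real.rpow_pos_of_pos hp _).ne', one_mul]
  have hΓ : 0 < Real.Gamma (1 - α) := Real.Gamma_pos_of_pos (by linarith)
  simp only [Mone]
  rw [h1, Ibeta hα0 hα1]
  field_simp

include hα0 hα1 in
lemma Mone_nonneg {p y : ℝ} (hy : 0 ≤ y) (hyp : y ≤ p) : 0 ≤ Mone α p y := by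
  have hΓ : 0 < Real.Gamma (1 - α) := Real.Gamma_pos_of_pos (by linarith)
  exact mul_nonneg (by positivity)
    (intervalIntegral.integral_nonneg hyp fun u hu =>
      Real.rpow_nonneg (base_nonneg hα0 hα1 (hy.trans hu.1) hu.2) _)

include hα0 hα1 in
lemma Mone_le {p y : ℝ} (hy : 0 ≤ y) (hyp : y ≤ p) :
    Mone α p y ≤ Real.Gamma (1 + α/2) / Real.Gamma (1 - α/2) * p := by
  rcases eq_or_lt_of_le (hy.trans hyp) with rfl | hp
  · obtain rfl : y = 0 := le_antisymm hyp hy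
    simp [Mone]
  have hi := integrandIntegrable hα0 hα1 hp
  have hΓ : 0 < Real.Gamma (1 - α) := Real.Gamma_pos_of_pos (by linarith)
  have hsub1 : Set.uIcc 0 y ⊆ Set.uIcc 0 p := by
    rw [Set.uIcc_of_le hy, Set.uIcc_of_le hp.le]
    exact Set.Icc_subset_Icc le_rfl hyp
  have hsub2 : Set.uIcc y p ⊆ Set.uIcc 0 p := by
    rw [Set.uIcc_of_le hyp, Set.uIcc_of_le hp.le]
    exact Set.Icc_subset_Icc hy le_rfl
  have hadd := intervalIntegral.integral_add_adjacent_intervals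
    (hi.mono_set hsub1) (hi.mono_set hsub2)
  have h0y : 0 ≤ ∫ μ in (0:ℝ)..y, (1 - p ^ (-(2/α)) * μ ^ (2/α)) ^ (-α) :=
    intervalIntegral.integral_nonneg hy fun u hu =>
      Real.rpow_nonneg (base_nonneg hα0 hα1 hu.1 (hu.2.trans hyp)) _
  have hle : (∫ μ in y..p, (1 - p ^ (-(2/α)) * μ ^ (2/α)) ^ (-α)) ≤
      ∫ μ in (0:ℝ)..p, (1 - p ^ (-(2/α)) * μ ^ (2/α)) ^ (-α) := by
    rw [← hadd]; linarith
  have := mul_le_mul_of_nonneg_left hle (by positivity : (0:ℝ) ≤ 1 / Real.Gamma (1 - α))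
  calc Mone α p y ≤ Mone α p 0 := this
    _ = _ := Mone_zero hα0 hα1 hp

end aux2

section main
variable {α : ℝ} (hα0 : 0 < α) (hα1 : α < 1)

include hα0 hα1 in
lemma Mker_bound (n : ℕ) : ∀ p y : ℝ, 0 ≤ y → y ≤ p →
    0 ≤ Mker α (n+1) p y ∧
    Mker α (n+1) p y ≤ (Real.Gamma (1 + α/2) / Real.Gamma (1 - α/2) * p) ^ (n+1) *
      (p - y) ^ n / (Nat.factorial n) := by
  set C : ℝ := Real.Gamma (1 + α/2) / Real.Gamma (1 - α/2) with hCdef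
  have hC : 0 < C :=
    div_pos (Real.Gamma_pos_of_pos (by linarith)) (Real.Gamma_pos_of_pos (by linarith))
  induction n with
  | zero =>
    intro p y hy hyp
    refine ⟨Mone_nonneg hα0 hα1 hy hyp, ?_⟩
    simpa [Mker] using Mone_le hα0 hα1 hy hyp
  | succ n IH =>
    intro p y hy hyp
    have hp0 : 0 ≤ p := hy.trans hyp
    have hCp : 0 ≤ C * p := mul_nonneg hC.le hp0
    have hMker_eq : Mker α (n+2) p y = ∫ a in y..p, Mone α a y * Mker α (n+1) p a := rfl
    have hnonneg : 0 ≤ Mker α (n+2) p y := by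
      rw [hMker_eq]
      refine intervalIntegral.integral_nonneg hyp fun a ha => ?_
      exact mul_nonneg (Mone_nonneg hα0 hα1 hy ha.1)
        ((IH p a (hy.trans ha.1) ha.2).1)
    refine ⟨hnonneg, ?_⟩
    rw [hMker_eq]
    by_cases hInt : IntervalIntegrable (fun a => Mone α a y * Mker α (n+1) p a) volume y p
    · set K : ℝ := (C * p) ^ (n+1) * (C * p) / (Nat.factorial n) with hK
      have hgle : ∀ a ∈ Set.Icc y p, Mone α a y * Mker α (n+1) p a ≤ K * (p - a) ^ n := by
        intro a ha
        have h1 : Mone α a y ≤ C * p :=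
          (Mone_le hα0 hα1 hy ha.1).trans
            (mul_le_mul_of_nonneg_left ha.2 hC.le)
        have h2 := IH p a (hy.trans ha.1) ha.2
        calc Mone α a y * Mker α (n+1) p a
            ≤ (C * p) * ((C * p) ^ (n+1) * (p - a) ^ n / (Nat.factorial n)) :=
              mul_le_mul h1 h2.2 h2.1 hCp
          _ = K * (p - a) ^ n := by rw [hK]; ring
      have hgint : IntervalIntegrable (fun a => K * (p - a) ^ n) volume y p :=
        ((continuous_const.mul ((continuous_const.sub continuous_id).pow n)).intervalIntegrable _ _)
      have hmono := intervalIntegral.integral_mono_on hyp hInt hgint hgle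
      have hval : (∫ a in y..p, K * (p - a) ^ n) = K * ((p - y) ^ (n+1) / (n+1)) := by
        rw [intervalIntegral.integral_const_mul]
        congr 1
        have hcs := intervalIntegral.integral_comp_sub_left (a := y) (b := p)
          (fun x : ℝ => x ^ n) p
        rw [hcs, sub_self, integral_pow]
        simp
      refine hmono.trans (le_of_eq ?_)
      rw [hval, hK, Nat.factorial_succ]
      have hfac : (0:ℝ) < (Nat.factorial n : ℝ) := by exact_mod_cast n.factorial_pos
      have hn1 : (0:ℝ) < (n:ℝ) + 1 := by positivity
      push_cast
      rw [pow_succ]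
      field_simp
      ring
    · rw [intervalIntegral.integral_undef hInt]
      apply div_nonneg (mul_nonneg (pow_nonneg hCp _) (pow_nonneg (by linarith) _))
        (Nat.cast_nonneg _)

end main

/-- For `n ≥ 2` and `0 ≤ y ≤ p`:
`0 ≤ Mₙ(p,y) ≤ [(Γ(1+α/2)/Γ(1-α/2)) p]ⁿ · p^{n-1}/(n-1)!`. -/
theorem stmt4 (α c₁ : ℝ) (hα0 : 0 < α) (hα1 : α < 1) (hc₁ : 0 < c₁) :
    ∀ n : ℕ, 2 ≤ n → ∀ p y : ℝ, 0 ≤ y → y ≤ p →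
      0 ≤ Mker α n p y ∧
      Mker α n p y ≤ (Real.Gamma (1 + α/2) / Real.Gamma (1 - α/2) * p) ^ n *
        p ^ (n - 1) / (Nat.factorial (n - 1)) := by
  intro n hn p y hy hyp
  obtain ⟨m, rfl⟩ : ∃ m, n = m + 2 := ⟨n - 2, by omega⟩
  have h := Mker_bound hα0 hα1 (m+1) p y hy hyp
  refine ⟨h.1, h.2.trans ?_⟩
  have hC : 0 ≤ Real.Gamma (1 + α/2) / Real.Gamma (1 - α/2) * p :=
    mul_nonneg (div_nonneg (Real.Gamma_pos_of_pos (by linarith)).le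
      (Real.Gamma_pos_of_pos (by linarith)).le) (hy.trans hyp)
  have hidx : m + 2 - 1 = m + 1 := rfl
  rw [hidx]
  gcongr
  · linarith
end

section
/- Let α ∈ (0,1), c₁ > 0 and set N(p,y) = Σ_{n=1}^∞ Mₙ(p,y). For every R > 0, the series converges uniformly on W_R = {(p,y) : 0 ≤ y ≤ p ≤ R}, and N is continuous, nonnegative and bounded on W_R; moreover N(p,y) > 0 whenever 0 ≤ y < p. -/
open Real MeasureTheory intervalIntegral Set Filter Topology

/-- `N(p,y) = Σ_{n=1}^∞ Mₙ(p,y)`, as a function of the pair `(p,y)`. -/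
noncomputable def Nker (α : ℝ) (q : ℝ × ℝ) : ℝ :=
  ∑' n : ℕ, Mker α (n + 1) q.1 q.2

noncomputable def gfun (α t : ℝ) : ℝ := (1 - t ^ (2/α)) ^ (-α)
noncomputable def Jfun (α x : ℝ) : ℝ := ∫ t in (0:ℝ)..x, gfun α t
noncomputable def clampf (x : ℝ) : ℝ := min 1 (max 0 x)
noncomputable def phiK (α p y : ℝ) : ℝ := p * Jfun α (clampf (y/p))
noncomputable def m1 (α p y : ℝ) : ℝ := (1 / Real.Gamma (1 - α)) * (phiK α p p - phiK α p y)
noncomputable def mtil (α : ℝ) : ℕ → ℝ → ℝ → ℝ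
  | 0 => m1 α
  | (n+1) => fun p y => ∫ a in y..p, m1 α a y * mtil α n p a
noncomputable def Bcon (α : ℝ) : ℝ := (1 / Real.Gamma (1 - α)) * Jfun α 1

section lemmas
variable {α : ℝ}

lemma spos (hα0 : 0 < α) : (0:ℝ) < 2/α := by positivity

lemma sone (hα0 : 0 < α) (hα1 : α < 1) : (1:ℝ) ≤ 2/α := by
  rw [le_div_iff₀ hα0]; linarith

lemma gfun_nonneg (hα0 : 0 < α) {t : ℝ} (ht0 : 0 ≤ t) (ht1 : t ≤ 1) : 0 ≤ gfun α t := by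
  have : t ^ (2/α) ≤ 1 := Real.rpow_le_one ht0 ht1 (le_of_lt (spos hα0))
  exact Real.rpow_nonneg (by linarith) _

lemma gfun_pos (hα0 : 0 < α) {t : ℝ} (ht0 : 0 ≤ t) (ht1 : t < 1) : 0 < gfun α t := by
  have : t ^ (2/α) < 1 := Real.rpow_lt_one ht0 ht1 (spos hα0)
  exact Real.rpow_pos_of_pos (by linarith) _

lemma gfun_contOn (hα0 : 0 < α) : ContinuousOn (gfun α) (Ioo 0 1) := by
  intro t ht
  have h1 : t ^ (2/α) < 1 := Real.rpow_lt_one ht.1.le ht.2 (spos hα0)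
  have hbase : (0:ℝ) < 1 - t ^ (2/α) := by linarith
  have hc1 : ContinuousAt (fun x : ℝ => 1 - x ^ (2/α)) t :=
    (continuous_const.sub (Real.continuous_rpow_const (le_of_lt (spos hα0)))).continuousAt
  exact (hc1.rpow_const (Or.inl (ne_of_gt hbase))).continuousWithinAt

lemma gfun_intble (hα0 : 0 < α) (hα1 : α < 1) : IntervalIntegrable (gfun α) volume 0 1 := by
  have hmaj : IntervalIntegrable (fun t : ℝ => (1 - t) ^ (-α)) volume 0 1 := by
    have := ((intervalIntegrable_rpow' (show (-1:ℝ) < -α by linarith)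
      (a := 0) (b := 1)).comp_sub_left 1).symm
    simpa using this
  refine hmaj.mono_fun ?_ ?_
  · have h1 : volume.restrict (Set.uIoc (0:ℝ) 1) = volume.restrict (Ioo (0:ℝ) 1) := by
      rw [uIoc_of_le (by norm_num : (0:ℝ) ≤ 1)]
      exact (Measure.restrict_congr_set Ioo_ae_eq_Ioc).symm
    rw [h1]
    exact (gfun_contOn hα0).aestronglyMeasurable measurableSet_Ioo
  · rw [uIoc_of_le (by norm_num : (0:ℝ) ≤ 1)]
    have key : ∀ᵐ x ∂volume.restrict (Ioc (0:ℝ) 1), ‖gfun α x‖ ≤ ‖(1 - x) ^ (-α)‖ := by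
      refine (ae_restrict_iff' measurableSet_Ioc).mpr (ae_of_all _ fun t ht => ?_)
      rcases eq_or_lt_of_le ht.2 with h1 | h1
      · simp only [gfun, h1, Real.one_rpow, sub_self,
          Real.zero_rpow (show -α ≠ 0 by simp; positivity)]
        simp
      · have hts : t ^ (2/α) ≤ t :=
          (Real.rpow_le_rpow_of_exponent_ge ht.1 h1.le (sone hα0 hα1)).trans_eq (Real.rpow_one t)
        have h2 : (0:ℝ) < 1 - t := by linarith
        have h3 : 1 - t ≤ 1 - t ^ (2/α) := by linarith
        have hle : gfun α t ≤ (1 - t) ^ (-α) :=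
          Real.rpow_le_rpow_of_nonpos h2 h3 (by linarith)
        rw [Real.norm_eq_abs, Real.norm_eq_abs,
          abs_of_nonneg (gfun_nonneg hα0 ht.1.le ht.2),
          abs_of_nonneg (Real.rpow_nonneg (by linarith) _)]
        exact hle
    exact key

lemma gfun_intble' (hα0 : 0 < α) (hα1 : α < 1) {a b : ℝ} (ha : a ∈ Icc (0:ℝ) 1) (hb : b ∈ Icc (0:ℝ) 1) :
    IntervalIntegrable (gfun α) volume a b :=
  (gfun_intble hα0 hα1).mono_set (by
    rw [uIcc_of_le (by norm_num : (0:ℝ) ≤ 1)]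
    exact uIcc_subset_Icc ha hb)

lemma Jfun_sub (hα0 : 0 < α) (hα1 : α < 1) {a b : ℝ} (ha : a ∈ Icc (0:ℝ) 1) (hb : b ∈ Icc (0:ℝ) 1) :
    Jfun α b - Jfun α a = ∫ t in a..b, gfun α t := by
  apply intervalIntegral.integral_interval_sub_left
  · exact gfun_intble' hα0 hα1 (by simp) hb
  · exact gfun_intble' hα0 hα1 (by simp) ha

lemma Jfun_mono (hα0 : 0 < α) (hα1 : α < 1) {a b : ℝ} (h0 : 0 ≤ a) (hab : a ≤ b) (hb1 : b ≤ 1) :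
    Jfun α a ≤ Jfun α b := by
  have := Jfun_sub hα0 hα1 (a := a) (b := b) ⟨h0, hab.trans hb1⟩ ⟨h0.trans hab, hb1⟩
  have hnn : 0 ≤ ∫ t in a..b, gfun α t :=
    intervalIntegral.integral_nonneg hab fun u hu =>
      gfun_nonneg hα0 (h0.trans hu.1) (hu.2.trans hb1)
  linarith

lemma Jfun_zero : Jfun α 0 = 0 := by simp [Jfun]

lemma Jfun_nonneg (hα0 : 0 < α) (hα1 : α < 1) {x : ℝ} (h0 : 0 ≤ x) (h1 : x ≤ 1) : 0 ≤ Jfun α x := by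
  have := Jfun_mono hα0 hα1 (le_refl 0) h0 h1
  rwa [Jfun_zero] at this

lemma Jfun_le_one (hα0 : 0 < α) (hα1 : α < 1) {x : ℝ} (h0 : 0 ≤ x) (h1 : x ≤ 1) : Jfun α x ≤ Jfun α 1 :=
  Jfun_mono hα0 hα1 h0 h1 le_rfl

lemma Jfun_contOn (hα0 : 0 < α) (hα1 : α < 1) : ContinuousOn (Jfun α) (Icc 0 1) := by
  have h := intervalIntegral.continuousOn_primitive_interval
    (a := (0:ℝ)) (b := 1) (μ := volume) (f := gfun α) ?_
  · rwa [uIcc_of_le (by norm_num : (0:ℝ) ≤ 1)] at h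
  · rw [uIcc_of_le (by norm_num : (0:ℝ) ≤ 1)]
    exact ((intervalIntegrable_iff_integrableOn_Icc_of_le (by norm_num)).mp
      (gfun_intble hα0 hα1))



lemma clampf_mem (x : ℝ) : clampf x ∈ Icc (0:ℝ) 1 := by
  constructor
  · exact le_min (by norm_num) (le_max_left 0 x)
  · exact min_le_left _ _

lemma clampf_continuous : Continuous clampf :=
  continuous_const.min (continuous_const.max continuous_id)

lemma clampf_of_mem {x : ℝ} (h0 : 0 ≤ x) (h1 : x ≤ 1) : clampf x = x := by
  simp [clampf, max_eq_right h0, min_eq_right h1]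

lemma Jclamp_continuous (hα0 : 0 < α) (hα1 : α < 1) :
    Continuous (fun x => Jfun α (clampf x)) :=
  (Jfun_contOn hα0 hα1).comp_continuous clampf_continuous clampf_mem

lemma Jclamp_bound (hα0 : 0 < α) (hα1 : α < 1) (x : ℝ) :
    |Jfun α (clampf x)| ≤ Jfun α 1 := by
  have h := clampf_mem x
  rw [abs_of_nonneg (Jfun_nonneg hα0 hα1 h.1 h.2)]
  exact Jfun_le_one hα0 hα1 h.1 h.2

lemma phiK_continuous (hα0 : 0 < α) (hα1 : α < 1) :
    Continuous (fun q : ℝ × ℝ => phiK α q.1 q.2) := by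
  rw [continuous_iff_continuousAt]
  intro q₀
  rcases eq_or_ne q₀.1 0 with h | h
  · have hval : phiK α q₀.1 q₀.2 = 0 := by simp [phiK, h]
    rw [ContinuousAt, hval]
    refine squeeze_zero_norm (a := fun q : ℝ × ℝ => |q.1| * Jfun α 1) (fun q => ?_) ?_
    · rw [Real.norm_eq_abs, phiK, abs_mul]
      exact mul_le_mul_of_nonneg_left (Jclamp_bound hα0 hα1 _) (abs_nonneg _)
    · have : Tendsto (fun q : ℝ × ℝ => |q.1| * Jfun α 1) (𝓝 q₀) (𝓝 (|q₀.1| * Jfun α 1)) :=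
        ((continuous_fst.abs.mul continuous_const).tendsto q₀)
      simpa [h] using this
  · exact (continuousAt_fst.mul ((Jclamp_continuous hα0 hα1).continuousAt.comp
      (continuousAt_snd.div continuousAt_fst h)))

lemma m1_continuous (hα0 : 0 < α) (hα1 : α < 1) :
    Continuous (fun q : ℝ × ℝ => m1 α q.1 q.2) := by
  have h1 := (phiK_continuous hα0 hα1).comp
    (continuous_fst.prodMk continuous_fst : Continuous fun q : ℝ × ℝ => (q.1, q.1))
  have h2 := phiK_continuous hα0 hα1
  exact continuous_const.mul (h1.sub h2)


lemma mtil_continuous (hα0 : 0 < α) (hα1 : α < 1) :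
    ∀ n, Continuous (fun q : ℝ × ℝ => mtil α n q.1 q.2)
  | 0 => m1_continuous hα0 hα1
  | (n+1) => by
    have ih := mtil_continuous hα0 hα1 n
    set F : (ℝ × ℝ) → ℝ → ℝ := fun q a => m1 α a q.2 * mtil α n q.1 a with hF
    have hFc : Continuous (Function.uncurry F) := by
      have c1 : Continuous fun z : (ℝ × ℝ) × ℝ => m1 α z.2 z.1.2 :=
        (m1_continuous hα0 hα1).comp (continuous_snd.prodMk (continuous_fst.snd))
      have c2 : Continuous fun z : (ℝ × ℝ) × ℝ => mtil α n z.1.1 z.2 :=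
        ih.comp ((continuous_fst.fst).prodMk continuous_snd)
      exact c1.mul c2
    have h1 : Continuous fun q : ℝ × ℝ => ∫ a in (0:ℝ)..q.1, F q a :=
      intervalIntegral.continuous_parametric_intervalIntegral_of_continuous hFc continuous_fst
    have h2 : Continuous fun q : ℝ × ℝ => ∫ a in (0:ℝ)..q.2, F q a :=
      intervalIntegral.continuous_parametric_intervalIntegral_of_continuous hFc continuous_snd
    refine (h1.sub h2).congr fun q => ?_
    have hint : ∀ b : ℝ, IntervalIntegrable (F q) volume 0 b := by
      intro b
      apply Continuous.intervalIntegrable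
      exact hFc.comp (Continuous.prodMk_right q)
    exact intervalIntegral.integral_interval_sub_left (hint q.1) (hint q.2)

lemma Mone_eq (hα0 : 0 < α) (hα1 : α < 1) {p y : ℝ} (hy : 0 ≤ y) (hyp : y ≤ p) :
    Mone α p y = m1 α p y := by
  rcases eq_or_lt_of_le (hy.trans hyp) with hp | hp
  · have hy0 : y = 0 := le_antisymm (hp ▸ hyp) hy
    simp [Mone, m1, phiK, ← hp, hy0]
  · have hp0 : p ≠ 0 := ne_of_gt hp
    have hyp1 : y / p ≤ 1 := (div_le_one hp).mpr hyp
    have hyp0 : 0 ≤ y / p := div_nonneg hy hp.le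
    set f : ℝ → ℝ := fun μ => (1 - p ^ (-(2/α)) * μ ^ (2/α)) ^ (-α) with hf
    have hcomp : (∫ t in (y/p)..1, f (p * t)) = p⁻¹ • ∫ μ in y..p, f μ := by
      have := intervalIntegral.integral_comp_mul_left f hp0 (a := y/p) (b := 1)
      rwa [mul_one, mul_div_cancel₀ y hp0] at this
    have hmain : (∫ μ in y..p, f μ) = p * ∫ t in (y/p)..1, f (p * t) := by
      rw [hcomp, smul_eq_mul, ← mul_assoc, mul_inv_cancel₀ hp0, one_mul]
    have hcongr : (∫ t in (y/p)..1, f (p * t)) = ∫ t in (y/p)..1, gfun α t := by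
      apply intervalIntegral.integral_congr
      intro t ht
      rw [uIcc_of_le hyp1] at ht
      have ht0 : 0 ≤ t := hyp0.trans ht.1
      simp only [hf, gfun]
      congr 1
      rw [Real.mul_rpow hp.le ht0, Real.rpow_neg hp.le, ← mul_assoc,
        inv_mul_cancel₀ (ne_of_gt (Real.rpow_pos_of_pos hp _)), one_mul]
    have hJ : (∫ t in (y/p)..1, gfun α t) = Jfun α 1 - Jfun α (y/p) :=
      (Jfun_sub hα0 hα1 ⟨hyp0, hyp1⟩ ⟨zero_le_one, le_refl 1⟩).symm
    have hclamp1 : phiK α p p = p * Jfun α 1 := by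
      rw [phiK, div_self hp0, clampf_of_mem zero_le_one le_rfl]
    have hclamp2 : phiK α p y = p * Jfun α (y / p) := by
      rw [phiK, clampf_of_mem hyp0 hyp1]
    rw [Mone, hmain, hcongr, hJ, m1, hclamp1, hclamp2]
    ring

lemma Mker_eq (hα0 : 0 < α) (hα1 : α < 1) :
    ∀ n, ∀ {p y : ℝ}, 0 ≤ y → y ≤ p → Mker α (n+1) p y = mtil α n p y
  | 0, p, y, hy, hyp => Mone_eq hα0 hα1 hy hyp
  | (n+1), p, y, hy, hyp => by
    show (∫ a in y..p, Mone α a y * Mker α (n+1) p a) = ∫ a in y..p, m1 α a y * mtil α n p a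
    apply intervalIntegral.integral_congr
    intro a ha
    rw [uIcc_of_le hyp] at ha
    show Mone α a y * Mker α (n+1) p a = m1 α a y * mtil α n p a
    rw [Mone_eq hα0 hα1 hy ha.1, Mker_eq hα0 hα1 n (hy.trans ha.1) ha.2]


lemma Gamma_inv_pos (hα1 : α < 1) : 0 < 1 / Real.Gamma (1 - α) := by
  have := Real.Gamma_pos_of_pos (show (0:ℝ) < 1 - α by linarith)
  positivity

lemma Bcon_nonneg (hα0 : 0 < α) (hα1 : α < 1) : 0 ≤ Bcon α :=
  mul_nonneg (Gamma_inv_pos hα1).le (Jfun_nonneg hα0 hα1 zero_le_one le_rfl)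

lemma m1_eq_pos (hα1 : α < 1) {p y : ℝ} (hp : 0 < p) (hy0 : 0 ≤ y) (hyp : y ≤ p) :
    m1 α p y = (1 / Real.Gamma (1 - α)) * (p * (Jfun α 1 - Jfun α (y / p))) := by
  have hyp1 : y / p ≤ 1 := (div_le_one hp).mpr hyp
  have hyp0 : 0 ≤ y / p := div_nonneg hy0 hp.le
  rw [m1, phiK, phiK, div_self (ne_of_gt hp), clampf_of_mem zero_le_one le_rfl,
    clampf_of_mem hyp0 hyp1]
  ring

lemma m1_bounds (hα0 : 0 < α) (hα1 : α < 1) {p y : ℝ} (hy : 0 ≤ y) (hyp : y ≤ p) :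
    0 ≤ m1 α p y ∧ m1 α p y ≤ Bcon α * p := by
  rcases eq_or_lt_of_le (hy.trans hyp) with hp | hp
  · have hy0 : y = 0 := le_antisymm (hp ▸ hyp) hy
    constructor <;> simp [m1, phiK, ← hp, hy0]
  · have hyp1 : y / p ≤ 1 := (div_le_one hp).mpr hyp
    have hyp0 : 0 ≤ y / p := div_nonneg hy hp.le
    rw [m1_eq_pos hα1 hp hy hyp]
    have h1 : 0 ≤ Jfun α (y / p) := Jfun_nonneg hα0 hα1 hyp0 hyp1
    have h2 : Jfun α (y / p) ≤ Jfun α 1 := Jfun_le_one hα0 hα1 hyp0 hyp1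
    have hγ := Gamma_inv_pos (α := α) hα1
    constructor
    · apply mul_nonneg hγ.le
      apply mul_nonneg hp.le
      linarith
    · rw [Bcon]
      calc (1 / Real.Gamma (1 - α)) * (p * (Jfun α 1 - Jfun α (y / p)))
          ≤ (1 / Real.Gamma (1 - α)) * (p * Jfun α 1) := by
            apply mul_le_mul_of_nonneg_left _ hγ.le
            apply mul_le_mul_of_nonneg_left _ hp.le
            linarith
        _ = 1 / Real.Gamma (1 - α) * Jfun α 1 * p := by ring

lemma m1_pos (hα0 : 0 < α) (hα1 : α < 1) {p y : ℝ} (hy : 0 ≤ y) (hyp : y < p) :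
    0 < m1 α p y := by
  have hp : 0 < p := hy.trans_lt hyp
  have hyp1 : y / p < 1 := (div_lt_one hp).mpr hyp
  have hyp0 : 0 ≤ y / p := div_nonneg hy hp.le
  rw [m1_eq_pos hα1 hp hy hyp.le]
  have hJ : Jfun α 1 - Jfun α (y / p) = ∫ t in (y/p)..1, gfun α t :=
    Jfun_sub hα0 hα1 ⟨hyp0, hyp1.le⟩ ⟨zero_le_one, le_rfl⟩
  have hpos : 0 < ∫ t in (y/p)..1, gfun α t := by
    apply intervalIntegral.intervalIntegral_pos_of_pos_on
    · exact gfun_intble' hα0 hα1 ⟨hyp0, hyp1.le⟩ ⟨zero_le_one, le_rfl⟩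
    · exact fun t ht => gfun_pos hα0 (hyp0.trans ht.1.le) ht.2
    · exact hyp1
  rw [hJ]
  exact mul_pos (Gamma_inv_pos hα1) (mul_pos hp hpos)

lemma mtil_bounds (hα0 : 0 < α) (hα1 : α < 1) {R : ℝ} :
    ∀ n, ∀ {p y : ℝ}, 0 ≤ y → y ≤ p → p ≤ R →
      0 ≤ mtil α n p y ∧ mtil α n p y ≤ (Bcon α * R) ^ (n+1) * (p - y) ^ n / n.factorial
  | 0, p, y, hy, hyp, hpR => by
    have h := m1_bounds hα0 hα1 hy hyp
    refine ⟨h.1, ?_⟩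
    simp only [zero_add, pow_one, pow_zero, mul_one, Nat.factorial_zero, Nat.cast_one, div_one]
    calc m1 α p y ≤ Bcon α * p := h.2
      _ ≤ Bcon α * R := mul_le_mul_of_nonneg_left hpR (Bcon_nonneg hα0 hα1)
  | (n+1), p, y, hy, hyp, hpR => by
    have hBR : 0 ≤ Bcon α * R :=
      mul_nonneg (Bcon_nonneg hα0 hα1) ((hy.trans hyp).trans hpR)
    have hptwise : ∀ a ∈ Icc y p, m1 α a y * mtil α n p a
        ≤ (Bcon α * R) * ((Bcon α * R) ^ (n+1) * (p - a) ^ n / n.factorial) := by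
      intro a ha
      have hm := m1_bounds hα0 hα1 hy ha.1
      have hmt := mtil_bounds hα0 hα1 n (hy.trans ha.1) ha.2 hpR
      have hm2 : m1 α a y ≤ Bcon α * R := hm.2.trans
        (mul_le_mul_of_nonneg_left (ha.2.trans hpR) (Bcon_nonneg hα0 hα1))
      exact mul_le_mul hm2 hmt.2 hmt.1 hBR
    have hint1 : IntervalIntegrable (fun a => m1 α a y * mtil α n p a) volume y p := by
      apply Continuous.intervalIntegrable
      exact ((m1_continuous hα0 hα1).comp (continuous_id.prodMk continuous_const)).mul
        ((mtil_continuous hα0 hα1 n).comp (continuous_const.prodMk continuous_id))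
    have hint2 : IntervalIntegrable
        (fun a => (Bcon α * R) * ((Bcon α * R) ^ (n+1) * (p - a) ^ n / n.factorial)) volume y p := by
      apply Continuous.intervalIntegrable
      fun_prop
    constructor
    · apply intervalIntegral.integral_nonneg hyp
      intro a ha
      have hm := m1_bounds hα0 hα1 hy ha.1
      have hmt := mtil_bounds hα0 hα1 n (hy.trans ha.1) ha.2 hpR
      exact mul_nonneg hm.1 hmt.1
    · have hle := intervalIntegral.integral_mono_on hyp hint1 hint2 hptwise
      refine hle.trans ?_
      have hpow : (∫ a in y..p, (p - a) ^ n) = (p - y) ^ (n+1) / (n+1) := by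
        rw [intervalIntegral.integral_comp_sub_left (fun x => x ^ n) p, sub_self,
          integral_pow]
        simp
      have : (∫ a in y..p, (Bcon α * R) * ((Bcon α * R) ^ (n+1) * (p - a) ^ n / n.factorial))
          = ((Bcon α * R) ^ (n+2) / n.factorial) * ∫ a in y..p, (p - a) ^ n := by
        rw [← intervalIntegral.integral_const_mul]
        apply intervalIntegral.integral_congr
        intro a _
        ring
      rw [this, hpow]
      apply le_of_eq
      have hfac : (0:ℝ) < n.factorial := by positivity
      rw [Nat.factorial_succ]
      push_cast
      rw [show n + 1 + 1 = n + 2 from rfl, div_mul_div_comm,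
        mul_comm ((n.factorial : ℝ)) ((n : ℝ) + 1)]

end lemmas

/-- On every `W_R = {(p,y) : 0 ≤ y ≤ p ≤ R}` the series defining `N` converges
uniformly, and `N` is continuous, nonnegative and bounded on `W_R`; moreover
`N(p,y) > 0` whenever `0 ≤ y < p`. -/
theorem stmt5 (α c₁ : ℝ) (hα0 : 0 < α) (hα1 : α < 1) (hc₁ : 0 < c₁) :
    (∀ R > (0:ℝ),
      TendstoUniformlyOn
        (fun k (q : ℝ × ℝ) => ∑ n ∈ Finset.range k, Mker α (n + 1) q.1 q.2)
        (Nker α) atTop {q : ℝ × ℝ | 0 ≤ q.2 ∧ q.2 ≤ q.1 ∧ q.1 ≤ R} ∧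
      ContinuousOn (Nker α) {q : ℝ × ℝ | 0 ≤ q.2 ∧ q.2 ≤ q.1 ∧ q.1 ≤ R} ∧
      (∀ q ∈ {q : ℝ × ℝ | 0 ≤ q.2 ∧ q.2 ≤ q.1 ∧ q.1 ≤ R}, 0 ≤ Nker α q) ∧
      (∃ C : ℝ, ∀ q ∈ {q : ℝ × ℝ | 0 ≤ q.2 ∧ q.2 ≤ q.1 ∧ q.1 ≤ R}, |Nker α q| ≤ C))
    ∧ (∀ p y : ℝ, 0 ≤ y → y < p → 0 < Nker α (p, y)) := by
  have hub : ∀ R : ℝ, 0 ≤ R → ∀ n (q : ℝ × ℝ),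
      q ∈ {q : ℝ × ℝ | 0 ≤ q.2 ∧ q.2 ≤ q.1 ∧ q.1 ≤ R} →
      ‖Mker α (n+1) q.1 q.2‖ ≤ Bcon α * R * ((Bcon α * R * R) ^ n / n.factorial) := by
    intro R hR n q hq
    obtain ⟨h1, h2, h3⟩ := hq
    have hBR : 0 ≤ Bcon α * R := mul_nonneg (Bcon_nonneg hα0 hα1) hR
    rw [Mker_eq hα0 hα1 n h1 h2]
    have hb := mtil_bounds hα0 hα1 n h1 h2 h3
    rw [Real.norm_eq_abs, abs_of_nonneg hb.1]
    refine hb.2.trans ?_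
    have hpy0 : 0 ≤ q.1 - q.2 := by linarith
    have hpyR : q.1 - q.2 ≤ R := by linarith
    have hfac : (0:ℝ) < n.factorial := by positivity
    rw [pow_succ', mul_assoc, mul_div_assoc, mul_div_assoc]
    refine mul_le_mul_of_nonneg_left ?_ hBR
    rw [← mul_div_assoc, div_le_div_iff_of_pos_right hfac, ← mul_pow]
    exact pow_le_pow_left₀ (mul_nonneg hBR hpy0)
      (mul_le_mul_of_nonneg_left hpyR hBR) n
  have hnn : ∀ n (q : ℝ × ℝ), 0 ≤ q.2 → q.2 ≤ q.1 → 0 ≤ Mker α (n+1) q.1 q.2 := by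
    intro n q h1 h2
    rw [Mker_eq hα0 hα1 n h1 h2]
    exact (mtil_bounds hα0 hα1 n h1 h2 (le_refl q.1)).1
  have hsummu : ∀ R : ℝ, Summable (fun n : ℕ =>
      Bcon α * R * ((Bcon α * R * R) ^ n / n.factorial)) :=
    fun R => (Real.summable_pow_div_factorial (Bcon α * R * R)).mul_left _
  have hsumf : ∀ q : ℝ × ℝ, 0 ≤ q.2 → q.2 ≤ q.1 →
      Summable (fun n : ℕ => Mker α (n+1) q.1 q.2) := by
    intro q h1 h2
    refine Summable.of_nonneg_of_le (fun n => hnn n q h1 h2) (fun n => ?_) (hsummu q.1)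
    have := hub q.1 (h1.trans h2) n q ⟨h1, h2, le_refl _⟩
    rwa [Real.norm_eq_abs, abs_of_nonneg (hnn n q h1 h2)] at this
  constructor
  · intro R hR
    have htuo : TendstoUniformlyOn
        (fun k (q : ℝ × ℝ) => ∑ n ∈ Finset.range k, Mker α (n + 1) q.1 q.2)
        (Nker α) atTop {q : ℝ × ℝ | 0 ≤ q.2 ∧ q.2 ≤ q.1 ∧ q.1 ≤ R} :=
      tendstoUniformlyOn_tsum_nat (hsummu R) (hub R hR.le)
    refine ⟨htuo, ?_, ?_, ?_⟩
    · refine htuo.continuousOn (Eventually.frequently (Eventually.of_forall fun k => ?_))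
      have hcont : ContinuousOn (fun q : ℝ × ℝ => ∑ n ∈ Finset.range k, mtil α n q.1 q.2)
          {q : ℝ × ℝ | 0 ≤ q.2 ∧ q.2 ≤ q.1 ∧ q.1 ≤ R} :=
        (continuous_finset_sum _ fun n _ => mtil_continuous hα0 hα1 n).continuousOn
      exact hcont.congr fun q hq =>
        Finset.sum_congr rfl fun n _ => Mker_eq hα0 hα1 n hq.1 hq.2.1
    · intro q hq
      exact tsum_nonneg fun n => hnn n q hq.1 hq.2.1
    · refine ⟨∑' n : ℕ, Bcon α * R * ((Bcon α * R * R) ^ n / n.factorial), fun q hq => ?_⟩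
      rw [Nker, abs_of_nonneg (tsum_nonneg fun n => hnn n q hq.1 hq.2.1)]
      refine Summable.tsum_le_tsum (fun n => ?_) (hsumf q hq.1 hq.2.1) (hsummu R)
      have := hub R ((hq.1.trans hq.2.1).trans hq.2.2) n q hq
      rwa [Real.norm_eq_abs, abs_of_nonneg (hnn n q hq.1 hq.2.1)] at this
  · intro p y hy hyp
    have hsum := hsumf (p, y) hy hyp.le
    have hfirst : Mker α 1 p y ≤ Nker α (p, y) :=
      Summable.le_tsum hsum 0 fun n _ => hnn n (p, y) hy hyp.le
    have hpos : 0 < Mker α 1 p y := by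
      rw [Mker_eq hα0 hα1 0 hy hyp.le]
      exact m1_pos hα0 hα1 hy hyp
    exact hpos.trans_le hfirst
end

section
/- Let α ∈ (0,1), c₀ > 0. Suppose f ∈ C²((c₀,∞)) with f' absolutely continuous near c₀ satisfies (1/Γ(1-α)) ∫_{c₀}^{ξ} (ξ-p)^{-α} f'(p) dp = (2/α)² ξ² f''(ξ) + (2/α)((2/α)+1) ξ f'(ξ) - (ξ-c₀)^{-α}/Γ(1-α) for ξ > c₀. Then lim_{ξ → c₀⁺} (ξ - c₀)^α f''(ξ) = (α/2)² c₀^{-2} / Γ(1-α). -/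
open Real MeasureTheory intervalIntegral Set Filter Topology

/-- If `f ∈ C²((c₀,∞))` with `f'` absolutely continuous near `c₀` satisfies the
self-similar equation
`(1/Γ(1-α)) ∫_{c₀}^{ξ}(ξ-p)^{-α} f'(p) dp
  = (2/α)² ξ² f''(ξ) + (2/α)((2/α)+1) ξ f'(ξ) - (ξ-c₀)^{-α}/Γ(1-α)` for `ξ > c₀`,
then `(ξ-c₀)^α f''(ξ) → (α/2)² c₀^{-2}/Γ(1-α)` as `ξ → c₀⁺`. -/
theorem stmt15 (α c₀ : ℝ) (hα0 : 0 < α) (hα1 : α < 1) (hc₀ : 0 < c₀)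
    (f : ℝ → ℝ) (hf : ContDiffOn ℝ 2 f (Set.Ioi c₀))
    -- `f'` absolutely continuous on a (right) neighborhood of `c₀`:
    (hAC : ∃ δ > 0, ∃ g : ℝ → ℝ, IntervalIntegrable g volume c₀ (c₀ + δ) ∧
      ContinuousOn (deriv f) (Set.Icc c₀ (c₀ + δ)) ∧
      ∀ x ∈ Set.Icc c₀ (c₀ + δ), deriv f x = deriv f c₀ + ∫ t in c₀..x, g t)
    (heq : ∀ ξ : ℝ, c₀ < ξ →
      (1 / Real.Gamma (1 - α)) * (∫ p in c₀..ξ, (ξ - p) ^ (-α) * deriv f p) =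
        (2/α) ^ 2 * ξ ^ 2 * deriv (deriv f) ξ
          + (2/α) * ((2/α) + 1) * ξ * deriv f ξ
          - (ξ - c₀) ^ (-α) / Real.Gamma (1 - α)) :
    Tendsto (fun ξ => (ξ - c₀) ^ α * deriv (deriv f) ξ) (𝓝[>] c₀)
      (𝓝 ((α/2) ^ 2 * c₀ ^ (-2 : ℝ) / Real.Gamma (1 - α))) := by
  obtain ⟨δ, hδ, g, hg, hcont, -⟩ := hAC
  set Γ := Real.Gamma (1 - α) with hΓdef
  have hΓ : 0 < Γ := Real.Gamma_pos_of_pos (by linarith)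
  have hαne : α ≠ 0 := hα0.ne'
  -- bound on deriv f
  obtain ⟨M, hM⟩ := isCompact_Icc.exists_bound_of_continuousOn hcont
  have hM0 : 0 ≤ M := (norm_nonneg _).trans (hM c₀ ⟨le_refl _, by linarith⟩)
  -- the explicit function F
  set F : ℝ → ℝ := fun ξ =>
    ((ξ - c₀) ^ α * ((1/Γ) * (∫ p in c₀..ξ, (ξ - p) ^ (-α) * deriv f p))
      - (ξ - c₀) ^ α * ((2/α) * ((2/α) + 1) * ξ * deriv f ξ) + 1/Γ)
      / ((2/α) ^ 2 * ξ ^ 2) with hF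
  -- the target function equals F eventually
  have hEq : ∀ᶠ ξ in 𝓝[>] c₀, (ξ - c₀) ^ α * deriv (deriv f) ξ = F ξ := by
    filter_upwards [self_mem_nhdsWithin] with ξ (hξ : c₀ < ξ)
    have hξ0 : 0 < ξ := lt_trans hc₀ hξ
    have hne : (2/α) ^ 2 * ξ ^ 2 ≠ 0 := by positivity
    rw [hF, eq_div_iff hne]
    have h1 := heq ξ hξ
    have hcancel : (ξ - c₀) ^ α * (ξ - c₀) ^ (-α) = 1 := by
      rw [← Real.rpow_add (by linarith)]; simp
    calc (ξ - c₀) ^ α * deriv (deriv f) ξ * ((2/α) ^ 2 * ξ ^ 2)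
        = (ξ - c₀) ^ α * ((2/α) ^ 2 * ξ ^ 2 * deriv (deriv f) ξ) := by ring
      _ = (ξ - c₀) ^ α * ((1/Γ) * (∫ p in c₀..ξ, (ξ - p) ^ (-α) * deriv f p)
            - (2/α) * ((2/α) + 1) * ξ * deriv f ξ + (ξ - c₀) ^ (-α) / Γ) := by
          rw [show (2/α) ^ 2 * ξ ^ 2 * deriv (deriv f) ξ
              = (1/Γ) * (∫ p in c₀..ξ, (ξ - p) ^ (-α) * deriv f p)
                - (2/α) * ((2/α) + 1) * ξ * deriv f ξ + (ξ - c₀) ^ (-α) / Γ by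
            linarith]
      _ = (ξ - c₀) ^ α * ((1/Γ) * (∫ p in c₀..ξ, (ξ - p) ^ (-α) * deriv f p))
            - (ξ - c₀) ^ α * ((2/α) * ((2/α) + 1) * ξ * deriv f ξ)
            + (ξ - c₀) ^ α * (ξ - c₀) ^ (-α) * (1/Γ) := by ring
      _ = _ := by rw [hcancel]; ring
  -- basic limits
  have hsub : Tendsto (fun ξ => ξ - c₀) (𝓝[>] c₀) (𝓝 0) := by
    have h : Tendsto (fun ξ : ℝ => ξ - c₀) (𝓝 c₀) (𝓝 (c₀ - c₀)) :=
      (continuous_sub_right c₀).tendsto c₀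
    simpa using h.mono_left nhdsWithin_le_nhds
  have T1 : Tendsto (fun ξ => (ξ - c₀) ^ α) (𝓝[>] c₀) (𝓝 0) := by
    have hc : ContinuousAt (fun x : ℝ => x ^ α) 0 :=
      Real.continuousAt_rpow_const 0 α (Or.inr hα0.le)
    have := hc.tendsto.comp hsub
    simpa [Function.comp_def, Real.zero_rpow hαne] using this
  have hf'lim : Tendsto (deriv f) (𝓝[>] c₀) (𝓝 (deriv f c₀)) := by
    rw [← nhdsWithin_Ioc_eq_nhdsGT (show c₀ < c₀ + δ by linarith)]
    exact ((hcont c₀ ⟨le_refl _, by linarith⟩).mono Ioc_subset_Icc_self).mono_left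
      (le_refl _)
  -- limit of the integral term
  have T2 : Tendsto (fun ξ => (ξ - c₀) ^ α *
      ((1/Γ) * (∫ p in c₀..ξ, (ξ - p) ^ (-α) * deriv f p))) (𝓝[>] c₀) (𝓝 0) := by
    apply squeeze_zero_norm' (a := fun ξ => (1/Γ) * (M / (1 - α)) * (ξ - c₀))
    · filter_upwards [Ioo_mem_nhdsGT (show c₀ < c₀ + δ by linarith)] with ξ hξ
      obtain ⟨hξ1, hξ2⟩ := hξ
      have hle : c₀ ≤ ξ := hξ1.le
      -- integrability of the bound
      have hint : IntervalIntegrable (fun p => M * (ξ - p) ^ (-α)) volume c₀ ξ := by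
        have h0 : IntervalIntegrable (fun x : ℝ => x ^ (-α)) volume 0 (ξ - c₀) :=
          intervalIntegral.intervalIntegrable_rpow' (by linarith)
        have := ((h0.comp_sub_left ξ).const_mul M).symm
        simpa using this
      have hbound : ‖∫ p in c₀..ξ, (ξ - p) ^ (-α) * deriv f p‖
          ≤ |∫ p in c₀..ξ, M * (ξ - p) ^ (-α)| := by
        apply intervalIntegral.norm_integral_le_abs_of_norm_le _ hint
        rw [ae_restrict_iff' measurableSet_uIoc]
        refine ae_of_all _ fun t ht => ?_
        rw [uIoc_of_le hle] at ht
        have ht1 : 0 ≤ ξ - t := by linarith [ht.2]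
        have htM : ‖deriv f t‖ ≤ M := hM t ⟨ht.1.le, by linarith [ht.2]⟩
        have h1 : 0 ≤ (ξ - t) ^ (-α) := Real.rpow_nonneg ht1 _
        calc ‖(ξ - t) ^ (-α) * deriv f t‖ = (ξ - t) ^ (-α) * ‖deriv f t‖ := by
              rw [norm_mul, Real.norm_of_nonneg h1]
          _ ≤ (ξ - t) ^ (-α) * M := by exact mul_le_mul_of_nonneg_left htM h1
          _ = M * (ξ - t) ^ (-α) := by ring
      have hval : ∫ p in c₀..ξ, M * (ξ - p) ^ (-α)
          = M * ((ξ - c₀) ^ (1 - α) / (1 - α)) := by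
        rw [intervalIntegral.integral_const_mul]
        have : (∫ p in c₀..ξ, (ξ - p) ^ (-α)) = ∫ x in (ξ - ξ)..(ξ - c₀), x ^ (-α) :=
          intervalIntegral.integral_comp_sub_left (fun x => x ^ (-α)) ξ
        rw [this, sub_self, integral_rpow (Or.inl (by linarith))]
        rw [Real.zero_rpow (by linarith : -α + 1 ≠ 0)]
        ring_nf
      rw [norm_mul, norm_mul]
      have hnn : 0 ≤ (ξ - c₀) ^ α := Real.rpow_nonneg (by linarith) _
      have habs : |∫ p in c₀..ξ, M * (ξ - p) ^ (-α)|
          = M * ((ξ - c₀) ^ (1 - α) / (1 - α)) := by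
        rw [hval, abs_of_nonneg]
        exact mul_nonneg hM0 (div_nonneg (Real.rpow_nonneg (by linarith) _) (by linarith))
      calc ‖(ξ - c₀) ^ α‖ * (‖(1/Γ)‖ * ‖∫ p in c₀..ξ, (ξ - p) ^ (-α) * deriv f p‖)
          ≤ ‖(ξ - c₀) ^ α‖ * (‖(1/Γ)‖ * (M * ((ξ - c₀) ^ (1 - α) / (1 - α)))) := by
            apply mul_le_mul_of_nonneg_left _ (norm_nonneg _)
            exact mul_le_mul_of_nonneg_left (hbound.trans_eq habs) (norm_nonneg _)
        _ = (1/Γ) * (M / (1 - α)) * ((ξ - c₀) ^ α * (ξ - c₀) ^ (1 - α)) := by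
            rw [Real.norm_of_nonneg hnn, Real.norm_of_nonneg (by positivity : (0:ℝ) ≤ 1/Γ)]
            ring
        _ = (1/Γ) * (M / (1 - α)) * (ξ - c₀) := by
            rw [← Real.rpow_add (by linarith)]
            norm_num
    · have : Tendsto (fun ξ : ℝ => (1/Γ) * (M / (1 - α)) * (ξ - c₀)) (𝓝[>] c₀)
          (𝓝 ((1/Γ) * (M / (1 - α)) * 0)) := (tendsto_const_nhds.mul hsub)
      simpa using this
  -- limit of the f' term
  have T3 : Tendsto (fun ξ => (ξ - c₀) ^ α * ((2/α) * ((2/α) + 1) * ξ * deriv f ξ))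
      (𝓝[>] c₀) (𝓝 0) := by
    have h2 : Tendsto (fun ξ => (2/α) * ((2/α) + 1) * ξ * deriv f ξ) (𝓝[>] c₀)
        (𝓝 ((2/α) * ((2/α) + 1) * c₀ * deriv f c₀)) := by
      exact (tendsto_const_nhds.mul (tendsto_id.mono_left nhdsWithin_le_nhds)).mul hf'lim
    have := T1.mul h2
    simpa using this
  -- denominator
  have Tden : Tendsto (fun ξ : ℝ => (2/α) ^ 2 * ξ ^ 2) (𝓝[>] c₀)
      (𝓝 ((2/α) ^ 2 * c₀ ^ 2)) :=
    (tendsto_const_nhds.mul ((tendsto_id.mono_left nhdsWithin_le_nhds).pow 2))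
  have hdenne : (2/α) ^ 2 * c₀ ^ 2 ≠ 0 := by positivity
  have TF : Tendsto F (𝓝[>] c₀) (𝓝 ((0 - 0 + 1/Γ) / ((2/α) ^ 2 * c₀ ^ 2))) :=
    ((T2.sub T3).add tendsto_const_nhds).div Tden hdenne
  have hval : (0 - 0 + 1/Γ) / ((2/α) ^ 2 * c₀ ^ 2) = (α/2) ^ 2 * c₀ ^ (-2 : ℝ) / Γ := by
    have h2 : c₀ ^ (-2 : ℝ) = (c₀ ^ 2)⁻¹ := by
      rw [Real.rpow_neg hc₀.le, show (2:ℝ) = ((2:ℕ):ℝ) by norm_num, Real.rpow_natCast]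
    clear_value Γ
    rw [h2]
    field_simp
    ring
  rw [← hval]
  exact TF.congr' (hEq.mono fun ξ h => h.symm)
end
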